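/- arXiv:2405.16535 — 3 statements merged into one kernel-verified Lean document; each statement's English description precedes it below -/
import Mathlib

section
/- Let μ > 0, κ ≥ 0, σ > 0, n ≥ 1 an integer, f ∈ L²(0,T), and let a be a solution of a''(t) = −(μn²π²+κ)a'(t) − (σn²π²+1)n²π² a(t) + √2 f(t)((−1)ⁿ−1). Then for all t ∈ [0,T]: (a'(t) + (μn²π²+κ)a(t))² + (σn²π²+1)n²π² a(t)² + ∫₀ᵗ (μn²π²+κ)(σn²π²+1)n²π² a(s)² ds ≤ (a'(0) + (μn²π²+κ)a(0))² + (σn²π²+1)n²π² a(0)² + ∫₀ᵗ (μn²π²+κ) a'(s)² ds + (8((μ+κ)² + σ)/(σ(μn²π²+κ))) ∫₀ᵗ f(s)² ds. -/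
open MeasureTheory Set

lemma young_ineq (x y c : ℝ) (hc : 0 < c) : 2*x*y ≤ c*x^2 + y^2/c := by
  have h : (2*x*y - c*x^2) * c ≤ y^2 := by nlinarith [sq_nonneg (c*x - y)]
  have h2 := (le_div_iff₀ hc).2 h
  linarith

lemma d_sq_le_four (n : ℕ) : ((-1:ℝ)^n - 1)^2 ≤ 4 := by
  rcases Nat.even_or_odd n with he | ho
  · rw [he.neg_one_pow]; norm_num
  · rw [ho.neg_one_pow]; norm_num

lemma coef_core (A σ L R d : ℝ) (hσ : 0 < σ) (hL : 0 < L) (hR : 0 < R)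
    (hd4 : d^2 ≤ 4) (hkey : σ*L^2 ≤ A^2*R) :
    (1/L + L/R) * (2*d^2) ≤ 8*(A^2+σ)/(σ*L) := by
  rw [div_add_div _ _ hL.ne' hR.ne', div_mul_eq_mul_div,
    div_le_div_iff₀ (by positivity) (by positivity)]
  nlinarith [mul_nonneg (mul_nonneg (sub_nonneg.2 hd4) (mul_pos hσ hL).le)
      (by positivity : (0:ℝ) ≤ R + L*L),
    mul_nonneg hL.le (sub_nonneg.2 hkey)]

lemma key_core (μ κ σ : ℝ) (n : ℕ) (hμ : 0 < μ) (hκ : 0 ≤ κ) (hσ : 0 < σ) (hn : 1 ≤ n) :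
    0 < μ * (n:ℝ)^2*Real.pi^2 + κ ∧
    0 < (σ * (n:ℝ)^2*Real.pi^2 + 1) * (n:ℝ)^2 * Real.pi^2 ∧
    σ * (μ * (n:ℝ)^2*Real.pi^2 + κ)^2
      ≤ (μ+κ)^2 * ((σ * (n:ℝ)^2*Real.pi^2 + 1) * (n:ℝ)^2 * Real.pi^2) := by
  have hπ := Real.pi_gt_three
  have hn1 : (1:ℝ) ≤ (n:ℝ) := by exact_mod_cast hn
  have hn2 : (1:ℝ) ≤ (n:ℝ)^2 := by nlinarith
  have hπ2 : (9:ℝ) ≤ Real.pi^2 := by nlinarith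
  have hP : (1:ℝ) ≤ (n:ℝ)^2 * Real.pi^2 := by
    nlinarith [mul_le_mul hn2 hπ2 (by norm_num) (by nlinarith)]
  have hL : 0 < μ * (n:ℝ)^2*Real.pi^2 + κ := by
    nlinarith [mul_le_mul_of_nonneg_left hP hμ.le]
  have hσP : (0:ℝ) ≤ σ * ((n:ℝ)^2*Real.pi^2) := mul_nonneg hσ.le (by nlinarith)
  have hX : (1:ℝ) ≤ σ * (n:ℝ)^2*Real.pi^2 + 1 := by nlinarith
  have hR : 0 < (σ * (n:ℝ)^2*Real.pi^2 + 1) * (n:ℝ)^2 * Real.pi^2 := by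
    nlinarith [mul_le_mul hX hP zero_le_one (by nlinarith)]
  refine ⟨hL, hR, ?_⟩
  have hLP : μ * (n:ℝ)^2*Real.pi^2 + κ ≤ (μ+κ) * ((n:ℝ)^2*Real.pi^2) := by
    nlinarith [mul_le_mul_of_nonneg_left hP hκ]
  have hRP : σ * ((n:ℝ)^2*Real.pi^2)^2
      ≤ (σ * (n:ℝ)^2*Real.pi^2 + 1) * (n:ℝ)^2 * Real.pi^2 := by
    nlinarith [sq_nonneg ((n:ℝ)*Real.pi)]
  have h1 : (μ * (n:ℝ)^2*Real.pi^2 + κ)^2 ≤ ((μ+κ) * ((n:ℝ)^2*Real.pi^2))^2 := by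
    nlinarith [mul_self_le_mul_self hL.le hLP]
  nlinarith [mul_le_mul_of_nonneg_left h1 hσ.le, hRP, sq_nonneg (μ+κ),
    mul_le_mul_of_nonneg_left hRP (sq_nonneg (μ+κ))]

lemma sq_primitive_aux {t : ℝ} (ht : 0 ≤ t) {h : ℝ → ℝ}
    (hint : IntegrableOn h (Ioc 0 t)) :
    Integrable (fun s => (∫ u in Ioc (0:ℝ) s, h u) * h s) (volume.restrict (Ioc (0:ℝ) t))
    ∧ (∫ s in Ioc (0:ℝ) t, h s)^2
      = 2 * ∫ s in Ioc (0:ℝ) t, (∫ u in Ioc (0:ℝ) s, h u) * h s := by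
  set μt := volume.restrict (Ioc (0:ℝ) t) with hμt
  set K : ℝ → ℝ → ℝ := fun u v => if u ≤ v then h u * h v else 0 with hK
  have hKint : Integrable (Function.uncurry K) (μt.prod μt) := by
    have hm : Integrable (fun p : ℝ × ℝ => h p.1 * h p.2) (μt.prod μt) :=
      hint.mul_prod hint
    have he : Function.uncurry K
        = Set.indicator {p : ℝ × ℝ | p.1 ≤ p.2} (fun p => h p.1 * h p.2) := by
      ext p
      by_cases hp : p.1 ≤ p.2 <;>
        simp [Function.uncurry, hK, hp, Set.indicator_apply]
    rw [he]
    exact hm.indicator (measurableSet_le measurable_fst measurable_snd)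
  have hInner1 : ∀ u ∈ Ioc (0:ℝ) t,
      (∫ v, K u v ∂μt) = h u * ((∫ s in Ioc (0:ℝ) t, h s) - ∫ s in Ioc (0:ℝ) u, h s) := by
    intro u hu
    have h1 : (∫ v, K u v ∂μt) = ∫ v in Ioc (0:ℝ) t ∩ Ici u, h u * h v := by
      rw [hμt, ← integral_indicator (measurableSet_Ioc.inter measurableSet_Ici)]
      rw [← integral_indicator measurableSet_Ioc]
      congr 1
      ext v
      by_cases hv : 0 < v ∧ v ≤ t <;> by_cases huv : u ≤ v <;>
        simp [hK, Set.indicator_apply, hv, huv, Set.mem_inter_iff, Set.mem_Ioc, Set.mem_Ici]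
    have h2 : Ioc (0:ℝ) t ∩ Ici u = Icc u t := by
      ext v; simp only [mem_inter_iff, mem_Ioc, mem_Ici, mem_Icc]
      constructor
      · rintro ⟨⟨_, hv2⟩, hv3⟩; exact ⟨hv3, hv2⟩
      · rintro ⟨hv1, hv2⟩; exact ⟨⟨lt_of_lt_of_le hu.1 hv1, hv2⟩, hv1⟩
    have h3 : (∫ v in Icc u t, h u * h v) = h u * ∫ v in Ioc u t, h v := by
      rw [integral_Icc_eq_integral_Ioc, integral_const_mul]
    have h4 : (∫ s in Ioc (0:ℝ) u, h s) + (∫ s in Ioc u t, h s) = ∫ s in Ioc (0:ℝ) t, h s := by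
      rw [← setIntegral_union]
      · rw [Ioc_union_Ioc_eq_Ioc hu.1.le hu.2]
      · rw [Set.disjoint_left]; intro x hx hx'
        exact absurd hx'.1 (not_lt.2 hx.2)
      · exact measurableSet_Ioc
      · exact hint.mono_set (Ioc_subset_Ioc le_rfl hu.2)
      · exact hint.mono_set (Ioc_subset_Ioc hu.1.le le_rfl)
    rw [h1, h2, h3]
    rw [← h4]; ring
  have hInner2 : ∀ v ∈ Ioc (0:ℝ) t,
      (∫ u, K u v ∂μt) = (∫ u in Ioc (0:ℝ) v, h u) * h v := by
    intro v hv
    have h1 : (∫ u, K u v ∂μt) = ∫ u in Ioc (0:ℝ) t ∩ Iic v, h u * h v := by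
      rw [hμt, ← integral_indicator (measurableSet_Ioc.inter measurableSet_Iic)]
      rw [← integral_indicator measurableSet_Ioc]
      congr 1
      ext u
      by_cases hu : 0 < u ∧ u ≤ t <;> by_cases huv : u ≤ v <;>
        simp [hK, Set.indicator_apply, hu, huv, Set.mem_inter_iff, Set.mem_Ioc, Set.mem_Iic]
    have h2 : Ioc (0:ℝ) t ∩ Iic v = Ioc 0 v := by
      ext u; simp only [mem_inter_iff, mem_Ioc, mem_Iic]
      exact ⟨fun ⟨⟨h1', _⟩, h3'⟩ => ⟨h1', h3'⟩, fun ⟨h1', h2'⟩ => ⟨⟨h1', h2'.trans hv.2⟩, h2'⟩⟩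
    rw [h1, h2, integral_mul_const]
  have hFh : Integrable (fun s => (∫ u in Ioc (0:ℝ) s, h u) * h s) μt := by
    have := hKint.integral_prod_right
    refine this.congr ?_
    rw [hμt]
    filter_upwards [ae_restrict_mem measurableSet_Ioc] with v hv
    exact hInner2 v hv
  refine ⟨hFh, ?_⟩
  have hswap := integral_integral_swap hKint
  have hA : (∫ u, ∫ v, K u v ∂μt ∂μt)
      = ∫ u in Ioc (0:ℝ) t, h u * ((∫ s in Ioc (0:ℝ) t, h s) - ∫ s in Ioc (0:ℝ) u, h s) := by
    rw [hμt]
    exact setIntegral_congr_fun measurableSet_Ioc fun u hu => hInner1 u hu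
  have hB : (∫ v, ∫ u, K u v ∂μt ∂μt)
      = ∫ v in Ioc (0:ℝ) t, (∫ u in Ioc (0:ℝ) v, h u) * h v := by
    rw [hμt]
    exact setIntegral_congr_fun measurableSet_Ioc fun v hv => hInner2 v hv
  have hsplit : (∫ u in Ioc (0:ℝ) t, h u * ((∫ s in Ioc (0:ℝ) t, h s) - ∫ s in Ioc (0:ℝ) u, h s))
      = (∫ s in Ioc (0:ℝ) t, h s)^2 - ∫ u in Ioc (0:ℝ) t, (∫ s in Ioc (0:ℝ) u, h s) * h u := by
    have e1 : ∀ u, h u * ((∫ s in Ioc (0:ℝ) t, h s) - ∫ s in Ioc (0:ℝ) u, h s)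
        = (∫ s in Ioc (0:ℝ) t, h s) * h u - (∫ s in Ioc (0:ℝ) u, h s) * h u := fun u => by ring
    simp_rw [e1]
    rw [integral_sub (hint.const_mul _) hFh, integral_const_mul]
    ring_nf
  rw [hA, hB, hsplit] at hswap
  linarith

/-- Second energy estimate for the forced damped modal oscillator,
in the shifted variable a' + (μn²π²+κ)a. -/
theorem modal_shifted_energy_estimate (μ κ σ T : ℝ) (n : ℕ) (f a b : ℝ → ℝ)
    (hμ : 0 < μ) (hκ : 0 ≤ κ) (hσ : 0 < σ) (hT : 0 < T) (hn : 1 ≤ n)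
    (hf : MemLp f 2 (volume.restrict (Ioo (0:ℝ) T)))
    (hf2 : IntervalIntegrable (fun s => (f s) ^ 2) volume 0 T)
    (ha : ∀ t ∈ Icc (0:ℝ) T, HasDerivAt a (b t) t)
    (hrhs : IntervalIntegrable (fun s =>
      -(μ * (n:ℝ)^2 * Real.pi^2 + κ) * b s
        - (σ * (n:ℝ)^2 * Real.pi^2 + 1) * (n:ℝ)^2 * Real.pi^2 * a s
        + Real.sqrt 2 * f s * ((-1:ℝ)^n - 1)) volume 0 T)
    (hb : ∀ t ∈ Icc (0:ℝ) T, b t = b 0 + ∫ s in (0:ℝ)..t,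
      (-(μ * (n:ℝ)^2 * Real.pi^2 + κ) * b s
        - (σ * (n:ℝ)^2 * Real.pi^2 + 1) * (n:ℝ)^2 * Real.pi^2 * a s
        + Real.sqrt 2 * f s * ((-1:ℝ)^n - 1)))
    (hb2 : IntervalIntegrable (fun s => (b s) ^ 2) volume 0 T)
    (ha2 : IntervalIntegrable (fun s => (a s) ^ 2) volume 0 T) :
    ∀ t ∈ Icc (0:ℝ) T,
      (b t + (μ * (n:ℝ)^2 * Real.pi^2 + κ) * a t) ^ 2
          + (σ * (n:ℝ)^2 * Real.pi^2 + 1) * (n:ℝ)^2 * Real.pi^2 * (a t) ^ 2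
          + ∫ s in (0:ℝ)..t, (μ * (n:ℝ)^2 * Real.pi^2 + κ)
              * (σ * (n:ℝ)^2 * Real.pi^2 + 1) * (n:ℝ)^2 * Real.pi^2 * (a s) ^ 2
        ≤ (b 0 + (μ * (n:ℝ)^2 * Real.pi^2 + κ) * a 0) ^ 2
          + (σ * (n:ℝ)^2 * Real.pi^2 + 1) * (n:ℝ)^2 * Real.pi^2 * (a 0) ^ 2
          + (∫ s in (0:ℝ)..t, (μ * (n:ℝ)^2 * Real.pi^2 + κ) * (b s) ^ 2)
          + (8 * ((μ + κ) ^ 2 + σ) / (σ * (μ * (n:ℝ)^2 * Real.pi^2 + κ)))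
              * ∫ s in (0:ℝ)..t, (f s) ^ 2 := by
  intro t htmem
  obtain ⟨ht0, htT⟩ := htmem
  set L := μ * (n:ℝ)^2 * Real.pi^2 + κ with hLdef
  set R := (σ * (n:ℝ)^2 * Real.pi^2 + 1) * (n:ℝ)^2 * Real.pi^2 with hRdef
  set d := ((-1:ℝ)^n - 1) with hddef
  set rhs : ℝ → ℝ := fun s => -L * b s - R * a s + Real.sqrt 2 * f s * d with hrhsdef
  set w : ℝ → ℝ := fun s => -R * a s + Real.sqrt 2 * f s * d with hwdef
  -- basic positivity
  obtain ⟨hL, hR, hkeyσ⟩ := key_core μ κ σ n hμ hκ hσ hn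
  rw [← hLdef] at hL hkeyσ
  rw [← hRdef] at hR hkeyσ
  clear_value L R d rhs w
  -- continuity and integrability facts
  have haC : ContinuousOn a (Icc 0 T) := fun x hx => (ha x hx).continuousAt.continuousWithinAt
  have hrhsInt : IntegrableOn rhs (Ioc 0 T) :=
    (intervalIntegrable_iff_integrableOn_Ioc_of_le hT.le).1 hrhs
  have hbC : ContinuousOn b (Icc 0 T) := by
    have hprim : ContinuousOn (fun x => ∫ s in (0:ℝ)..x, rhs s) (Icc 0 T) := by
      have h1 : IntegrableOn rhs (uIcc 0 T) := by
        rw [uIcc_of_le hT.le, integrableOn_Icc_iff_integrableOn_Ioc]; exact hrhsInt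
      exact (intervalIntegral.continuousOn_primitive_interval h1).mono
        (by rw [uIcc_of_le hT.le])
    exact (continuousOn_const.add hprim).congr fun x hx => hb x hx
  have haInt : IntegrableOn a (Ioc 0 T) :=
    (haC.integrableOn_compact isCompact_Icc).mono_set Ioc_subset_Icc_self
  have hbInt : IntegrableOn b (Ioc 0 T) :=
    (hbC.integrableOn_compact isCompact_Icc).mono_set Ioc_subset_Icc_self
  have hwInt : IntegrableOn w (Ioc 0 T) := by
    have h1 : IntegrableOn (fun s => rhs s + L * b s) (Ioc 0 T) :=
      hrhsInt.add (hbInt.const_mul L)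
    exact h1.congr (ae_of_all _ fun s => by simp only [hrhsdef, hwdef]; ring)
  have hf2Int : IntegrableOn (fun s => f s ^ 2) (Ioc 0 T) :=
    (intervalIntegrable_iff_integrableOn_Ioc_of_le hT.le).1 hf2
  have ha2Int : IntegrableOn (fun s => a s ^ 2) (Ioc 0 T) :=
    (intervalIntegrable_iff_integrableOn_Ioc_of_le hT.le).1 ha2
  have hb2Int : IntegrableOn (fun s => b s ^ 2) (Ioc 0 T) :=
    (intervalIntegrable_iff_integrableOn_Ioc_of_le hT.le).1 hb2
  -- FTC for a
  have hbii : ∀ x ∈ Icc (0:ℝ) T, IntervalIntegrable b volume 0 x := fun x hx =>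
    (intervalIntegrable_iff_integrableOn_Ioc_of_le hx.1).2
      (hbInt.mono_set (Ioc_subset_Ioc le_rfl hx.2))
  have haFTC : ∀ x ∈ Icc (0:ℝ) T, a x = a 0 + ∫ s in (0:ℝ)..x, b s := by
    intro x hx
    have hder : ∀ s ∈ uIcc (0:ℝ) x, HasDerivAt a (b s) s := by
      intro s hs
      rw [uIcc_of_le hx.1] at hs
      exact ha s ⟨hs.1, hs.2.trans hx.2⟩
    have := intervalIntegral.integral_eq_sub_of_hasDerivAt hder (hbii x hx)
    linarith
  -- the shifted variable satisfies an integral equation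
  have hcEq : ∀ x ∈ Icc (0:ℝ) T,
      b x + L * a x = (b 0 + L * a 0) + ∫ s in Ioc (0:ℝ) x, w s := by
    intro x hx
    have hri : IntervalIntegrable rhs volume 0 x :=
      (intervalIntegrable_iff_integrableOn_Ioc_of_le hx.1).2
        (hrhsInt.mono_set (Ioc_subset_Ioc le_rfl hx.2))
    have h3 : (∫ s in (0:ℝ)..x, rhs s) + L * (∫ s in (0:ℝ)..x, b s)
        = ∫ s in Ioc (0:ℝ) x, w s := by
      rw [← intervalIntegral.integral_const_mul,
        ← intervalIntegral.integral_add hri ((hbii x hx).const_mul L),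
        ← intervalIntegral.integral_of_le hx.1]
      exact intervalIntegral.integral_congr fun s _ => by simp only [hrhsdef, hwdef]; ring
    have h1 := hb x hx
    have h2 := haFTC x hx
    rw [h1, h2, ← h3]; ring
  -- Fubini square identity for w on [0, t]
  have htIoc : Ioc (0:ℝ) t ⊆ Ioc 0 T := Ioc_subset_Ioc le_rfl htT
  obtain ⟨hFh, hsq⟩ := sq_primitive_aux ht0 (hwInt.mono_set htIoc)
  -- energy identity for the shifted variable
  have hptw : ∀ s ∈ Ioc (0:ℝ) t,
      2*(b 0 + L*a 0)*w s + 2*((∫ u in Ioc (0:ℝ) s, w u) * w s)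
        = 2*(b s + L*a s)*w s := by
    intro s hs
    rw [hcEq s ⟨hs.1.le, hs.2.trans htT⟩]; ring
  have h2ch : Integrable (fun s => 2*(b s + L*a s)*w s) (volume.restrict (Ioc (0:ℝ) t)) := by
    refine (((hwInt.mono_set htIoc).const_mul (2*(b 0 + L*a 0))).add (hFh.const_mul 2)).congr ?_
    filter_upwards [ae_restrict_mem measurableSet_Ioc] with s hs
    exact hptw s hs
  have hch : (b t + L*a t)^2 - (b 0 + L*a 0)^2 = ∫ s in Ioc (0:ℝ) t, 2*(b s + L*a s)*w s := by
    have hIeq : (∫ s in Ioc (0:ℝ) t, 2*(b s + L*a s)*w s)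
        = ∫ s in Ioc (0:ℝ) t, (2*(b 0 + L*a 0)*w s + 2*((∫ u in Ioc (0:ℝ) s, w u) * w s)) :=
      (setIntegral_congr_fun measurableSet_Ioc fun s hs => (hptw s hs).symm)
    rw [hIeq, integral_add ((hwInt.mono_set htIoc).const_mul _) (hFh.const_mul 2),
      integral_const_mul, integral_const_mul, ← hsq, hcEq t ⟨ht0, htT⟩]
    ring
  -- FTC for a^2
  have habII : IntervalIntegrable (fun s => 2*a s*b s) volume 0 t := by
    apply ContinuousOn.intervalIntegrable
    rw [uIcc_of_le ht0]
    have hsub : Icc (0:ℝ) t ⊆ Icc 0 T := Icc_subset_Icc le_rfl htT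
    exact (continuousOn_const.mul (haC.mono hsub)).mul (hbC.mono hsub)
  have hab : (a t)^2 - (a 0)^2 = ∫ s in Ioc (0:ℝ) t, 2*a s*b s := by
    have hder : ∀ s ∈ uIcc (0:ℝ) t, HasDerivAt (fun x => a x ^ 2) (2*a s*b s) s := by
      intro s hs
      rw [uIcc_of_le ht0] at hs
      have h' := (ha s ⟨hs.1, hs.2.trans htT⟩).pow 2
      exact h'.congr_deriv (by norm_num)
    have := intervalIntegral.integral_eq_sub_of_hasDerivAt hder habII
    rw [intervalIntegral.integral_of_le ht0] at this
    linarith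
  have habInt : Integrable (fun s => 2*a s*b s) (volume.restrict (Ioc (0:ℝ) t)) :=
    (intervalIntegrable_iff_integrableOn_Ioc_of_le ht0).1 habII
  -- the coefficient bound
  have hd4 : d^2 ≤ 4 := by rw [hddef]; exact d_sq_le_four n
  have hcoef : (1/L + L/R) * (2*d^2) ≤ 8*((μ+κ)^2+σ)/(σ*L) :=
    coef_core (μ+κ) σ L R d hσ hL hR hd4 hkeyσ
  -- pointwise estimate and integral monotonicity
  have hmonoInt2 : Integrable
      (fun s => L*b s^2 - L*R*a s^2 + (8*((μ+κ)^2+σ)/(σ*L))*f s^2)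
      (volume.restrict (Ioc (0:ℝ) t)) :=
    (((hb2Int.mono_set htIoc).const_mul L).sub
      ((ha2Int.mono_set htIoc).const_mul (L*R))).add
      ((hf2Int.mono_set htIoc).const_mul _)
  have hmono : (∫ s in Ioc (0:ℝ) t, (2*(b s + L*a s)*w s + R*(2*a s*b s)))
      ≤ ∫ s in Ioc (0:ℝ) t, (L*b s^2 - L*R*a s^2 + (8*((μ+κ)^2+σ)/(σ*L))*f s^2) := by
    refine setIntegral_mono_on (h2ch.add (habInt.const_mul R)) hmonoInt2
      measurableSet_Ioc ?_
    intro s _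
    simp only [hwdef]
    set G := Real.sqrt 2 * f s * d with hGdef
    have hgsq : G^2 = 2*d^2*f s^2 := by
      rw [hGdef, mul_pow, mul_pow, Real.sq_sqrt (by norm_num : (0:ℝ) ≤ 2)]; ring
    have y1 := young_ineq (b s) G L hL
    have y2 := young_ineq (L * a s) G (R/L) (div_pos hR hL)
    rw [hgsq] at y1 y2
    have e1 : (R/L)*(L*a s)^2 = L*R*a s^2 := by field_simp
    have e2 : (2*d^2*f s^2)/(R/L) = L/R*(2*d^2*f s^2) := by
      rw [div_div_eq_mul_div]; ring
    rw [e1, e2] at y2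
    have hint3 : (1/L + L/R)*(2*d^2)*(f s^2) ≤ (8*((μ+κ)^2+σ)/(σ*L))*(f s^2) :=
      mul_le_mul_of_nonneg_right hcoef (sq_nonneg (f s))
    have e3 : (2*d^2*f s^2)/L = 1/L*(2*d^2*f s^2) := by ring
    rw [e3] at y1
    linarith only [y1, y2, hint3]
  -- combine
  have hS : (∫ s in Ioc (0:ℝ) t, (2*(b s + L*a s)*w s + R*(2*a s*b s)))
      = (∫ s in Ioc (0:ℝ) t, 2*(b s + L*a s)*w s)
        + R * (∫ s in Ioc (0:ℝ) t, 2*a s*b s) := by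
    rw [integral_add h2ch (habInt.const_mul R), integral_const_mul]
  -- rewrite the goal in terms of Ioc integrals
  simp only [intervalIntegral.integral_of_le ht0]
  have e4 : (∫ s in Ioc (0:ℝ) t, L * (σ * (n:ℝ)^2 * Real.pi^2 + 1) * (n:ℝ)^2 * Real.pi^2 * (a s)^2)
      = ∫ s in Ioc (0:ℝ) t, L*R*(a s)^2 :=
    setIntegral_congr_fun measurableSet_Ioc fun s _ => by rw [hRdef]; ring
  rw [e4]
  have hsplit2 : (∫ s in Ioc (0:ℝ) t,
        (L*b s^2 - L*R*a s^2 + (8*((μ+κ)^2+σ)/(σ*L))*f s^2))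
      = (∫ s in Ioc (0:ℝ) t, L*b s^2) - (∫ s in Ioc (0:ℝ) t, L*R*a s^2)
        + (8*((μ+κ)^2+σ)/(σ*L)) * ∫ s in Ioc (0:ℝ) t, f s^2 := by
    have i1 : Integrable (fun s => L*b s^2 - L*R*a s^2) (volume.restrict (Ioc (0:ℝ) t)) :=
      ((hb2Int.mono_set htIoc).const_mul L).sub ((ha2Int.mono_set htIoc).const_mul (L*R))
    have i2 : Integrable (fun s => (8*((μ+κ)^2+σ)/(σ*L))*f s^2)
        (volume.restrict (Ioc (0:ℝ) t)) := (hf2Int.mono_set htIoc).const_mul _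
    rw [integral_add i1 i2,
      integral_sub ((hb2Int.mono_set htIoc).const_mul L)
        ((ha2Int.mono_set htIoc).const_mul (L*R)),
      integral_const_mul, integral_const_mul, integral_const_mul]
  have habR : R*(a t)^2 - R*(a 0)^2 = R * (∫ s in Ioc (0:ℝ) t, 2*a s*b s) := by
    rw [← hab]; ring
  linarith [hch, habR, hS, hmono, hsplit2]
end

section
/- Let μ, σ > 0, κ ≥ 0, r > 0 and set Ḡ = κ²r(κ + μπ²)/(3μπ²(r+1)²(1+σπ²)). Then inf{ 1/(1−Ḡp) + (r+1)²(1+σπ²)(1+p)/(pμr(κ+μπ²)) : p > 0, Ḡp < 1 } = (1 + κ/(πμ√3))² + (r+1)²(1+σπ²)/(rμ(κ+μπ²)). -/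
open Set

lemma abstract_glb (G A s : ℝ) (hG : 0 ≤ G) (hA : 0 < A) (hs : 0 ≤ s)
    (hs2 : s ^ 2 = G * A) :
    IsGLB {v : ℝ | ∃ p : ℝ, 0 < p ∧ G * p < 1 ∧ v = 1 / (1 - G * p) + A * (1 + p) / p}
      ((1 + s) ^ 2 + A) := by
  constructor
  · rintro v ⟨p, hp, h1, rfl⟩
    have hq : 0 < 1 - G * p := by linarith
    have key : 1 / (1 - G * p) + A * (1 + p) / p - ((1 + s) ^ 2 + A)
        = (A - 2 * s * (1 + s) * p + G * (1 + s) ^ 2 * p ^ 2) / ((1 - G * p) * p) := by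
      field_simp
      ring_nf
      linear_combination p * hs2
    have hnum : 0 ≤ A - 2 * s * (1 + s) * p + G * (1 + s) ^ 2 * p ^ 2 := by
      rcases eq_or_lt_of_le hG with h0 | h0
      · have hs0 : s = 0 := by nlinarith [sq_nonneg s]
        rw [hs0, ← h0]; nlinarith
      · nlinarith [sq_nonneg (s - G * (1 + s) * p)]
    nlinarith [div_nonneg hnum (le_of_lt (mul_pos hq hp))]
  · intro b hb
    rcases eq_or_lt_of_le hG with h0 | h0
    · obtain rfl : G = 0 := h0.symm
      have hs0 : s = 0 := by nlinarith [sq_nonneg s]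
      by_contra hlt
      push_neg at hlt
      rw [hs0] at hlt
      set ε := b - ((1 + 0 : ℝ) ^ 2 + A) with hε
      have hεpos : 0 < ε := by simp only [hε]; linarith
      set p := A / ε + 1 with hpdef
      have hppos : 0 < p := by positivity
      have hmem : b ≤ 1 / (1 - 0 * p) + A * (1 + p) / p :=
        hb ⟨p, hppos, by simpa using zero_lt_one, rfl⟩
      have hval : 1 / (1 - 0 * p) + A * (1 + p) / p = 1 + A + A / p := by
        field_simp; ring
      have hlt2 : A / p < ε := by
        rw [div_lt_iff₀ hppos]
        have hAε : A / ε < p := by rw [hpdef]; linarith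
        calc A = ε * (A / ε) := by field_simp
        _ < ε * p := (mul_lt_mul_iff_right₀ hεpos).mpr hAε
      rw [hval] at hmem
      have : b < b := by
        calc b ≤ 1 + A + A / p := hmem
        _ < 1 + A + ε := by linarith
        _ = b := by rw [hε]; ring
      exact lt_irrefl _ this
    · have hs2pos : 0 < s ^ 2 := hs2 ▸ mul_pos h0 hA
      have hspos : 0 < s := lt_of_le_of_ne hs (by rintro rfl; simp at hs2pos)
      have h1s : 0 < 1 + s := by linarith
      have hGne : G ≠ 0 := ne_of_gt h0
      have h1sne : (1 + s) ≠ 0 := ne_of_gt h1s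
      have hsne : s ≠ 0 := ne_of_gt hspos
      set p := s / (G * (1 + s)) with hpdef
      have hppos : 0 < p := by positivity
      have hGp : G * p = s / (1 + s) := by rw [hpdef]; field_simp
      refine hb ⟨p, hppos, ?_, ?_⟩
      · rw [hGp, div_lt_one h1s]; linarith
      · have e0 : A * (1 + p) / p = A + A / p := by field_simp; ring
        have e1 : 1 / (1 - G * p) = 1 + s := by
          rw [hGp, show (1 : ℝ) - s / (1 + s) = 1 / (1 + s) by field_simp; ring, one_div_one_div]
        have e2 : A / p = s * (1 + s) := by
          rw [hpdef]
          field_simp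
          linear_combination (-1 : ℝ) * hs2
        rw [e0, e1, e2]; ring

/-- With Ḡ = κ²r(κ+μπ²)/(3μπ²(r+1)²(1+σπ²)), the infimum of
1/(1−Ḡp) + (r+1)²(1+σπ²)(1+p)/(pμr(κ+μπ²)) over p > 0 with Ḡp < 1 equals
(1 + κ/(πμ√3))² + (r+1)²(1+σπ²)/(rμ(κ+μπ²)). -/
theorem inf_gain_identity (μ σ κ r : ℝ)
    (hμ : 0 < μ) (hσ : 0 < σ) (hr : 0 < r) (hκ : 0 ≤ κ) :
    IsGLB
      { v : ℝ | ∃ p : ℝ, 0 < p ∧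
          (κ^2 * r * (κ + μ * Real.pi^2)
            / (3 * μ * Real.pi^2 * (r+1)^2 * (1 + σ * Real.pi^2))) * p < 1 ∧
          v = 1 / (1 - (κ^2 * r * (κ + μ * Real.pi^2)
                / (3 * μ * Real.pi^2 * (r+1)^2 * (1 + σ * Real.pi^2))) * p)
            + (r+1)^2 * (1 + σ * Real.pi^2) * (1 + p) / (p * μ * r * (κ + μ * Real.pi^2)) }
      ((1 + κ / (Real.pi * μ * Real.sqrt 3)) ^ 2
        + (r+1)^2 * (1 + σ * Real.pi^2) / (r * μ * (κ + μ * Real.pi^2))) := by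
  have hπ : 0 < Real.pi := Real.pi_pos
  have hκμ : 0 < κ + μ * Real.pi ^ 2 := by positivity
  have hσπ : 0 < 1 + σ * Real.pi ^ 2 := by positivity
  have hr1 : 0 < r + 1 := by linarith
  set G : ℝ := κ^2 * r * (κ + μ * Real.pi^2)
      / (3 * μ * Real.pi^2 * (r+1)^2 * (1 + σ * Real.pi^2)) with hGdef
  set A : ℝ := (r+1)^2 * (1 + σ * Real.pi^2) / (r * μ * (κ + μ * Real.pi^2)) with hAdef
  set s : ℝ := κ / (Real.pi * μ * Real.sqrt 3) with hsdef
  have hG : 0 ≤ G := by rw [hGdef]; positivity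
  have hA : 0 < A := by rw [hAdef]; positivity
  have hs : 0 ≤ s := by rw [hsdef]; positivity
  have hsqrt3 : Real.sqrt 3 ^ 2 = 3 := Real.sq_sqrt (by norm_num)
  have hsqrt3pos : 0 < Real.sqrt 3 := Real.sqrt_pos.mpr (by norm_num)
  have hs2 : s ^ 2 = G * A := by
    rw [hsdef, hGdef, hAdef, div_pow, mul_pow, mul_pow, hsqrt3]
    field_simp
  have hset : { v : ℝ | ∃ p : ℝ, 0 < p ∧ G * p < 1 ∧
          v = 1 / (1 - G * p)
            + (r+1)^2 * (1 + σ * Real.pi^2) * (1 + p) / (p * μ * r * (κ + μ * Real.pi^2)) }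
      = {v : ℝ | ∃ p : ℝ, 0 < p ∧ G * p < 1 ∧ v = 1 / (1 - G * p) + A * (1 + p) / p} := by
    ext v
    simp only [Set.mem_setOf_eq]
    constructor
    · rintro ⟨p, hp, h1, rfl⟩
      exact ⟨p, hp, h1, by rw [hAdef]; field_simp⟩
    · rintro ⟨p, hp, h1, rfl⟩
      exact ⟨p, hp, h1, by rw [hAdef]; field_simp⟩
  rw [hset]
  exact abstract_glb G A s hG hA hs hs2
end

section
/- Let γ, k, Q, r, μ, σ > 0, κ ≥ 0, and suppose γ > γ*, where γ* = 2 / (1 − (μrk³Q/(1+σπ²))((1+κ/(πμ√3))² + (r+1)²(1+σπ²)/(rμ(κ+μπ²)))), assuming the denominator is positive. Then there exists a constant A > 0 such that for all φ ∈ H²(0,1) with φ'(0)=φ'(1)=0 and ∫₀¹φ=0, all u ∈ H¹₀(0,1), and all (ξ,w) ∈ ℝ²: q(ξ,w,φ,u) ≥ A(ξ² + w² + ‖u‖²_{H¹} + ‖φ‖²_{H²}), where q(ξ,w,φ,u) = kξ² + ((γ−2)/(2k))(w+kξ)² + Qκ‖u‖₂² + Qμ‖u'‖₂² + Qκr‖φ‖₂²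 + Qr(σκ+μ)‖φ'‖₂² + Qμσr‖φ''‖₂² + (γk³r²/2)Q² I² − γkQr(w+kξ)I, with I = ∫₀¹(κxφ(x) − ((r+1)/r)u(x) + μφ'(x))dx. -/
open MeasureTheory Set

section Helpers
open Filter

lemma memL2_of_continuousOn {f : ℝ → ℝ} (hf : ContinuousOn f (Icc 0 1)) :
    MemLp f 2 (volume.restrict (Ioo (0:ℝ) 1)) := by
  have hfm : AEStronglyMeasurable f (volume.restrict (Ioo (0:ℝ) 1)) :=
    (hf.mono Ioo_subset_Icc_self).aestronglyMeasurable measurableSet_Ioo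
  rw [memLp_two_iff_integrable_sq hfm]
  have : IntegrableOn (fun x => f x ^ 2) (Icc (0:ℝ) 1) := (hf.pow 2).integrableOn_Icc
  exact this.mono_set Ioo_subset_Icc_self

lemma integrableOn_of_continuousOn {f : ℝ → ℝ} (hf : ContinuousOn f (Icc 0 1)) :
    IntegrableOn f (Ioo (0:ℝ) 1) :=
  hf.integrableOn_Icc.mono_set Ioo_subset_Icc_self

lemma integral_cs {μ : Measure ℝ} {f g : ℝ → ℝ} (hf : MemLp f 2 μ) (hg : MemLp g 2 μ) :
    (∫ x, f x * g x ∂μ)^2 ≤ (∫ x, (f x)^2 ∂μ) * (∫ x, (g x)^2 ∂μ) := by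
  have hf2 := hf.integrable_sq
  have hg2 := hg.integrable_sq
  have hfg : Integrable (fun x => f x * g x) μ := by
    refine Integrable.mono' ((hf2.add hg2).div_const 2)
      (hf.aestronglyMeasurable.mul hg.aestronglyMeasurable) (Filter.Eventually.of_forall ?_)
    intro x
    have h := sq_nonneg (|f x| - |g x|)
    have : ‖f x * g x‖ = |f x| * |g x| := by rw [Real.norm_eq_abs, abs_mul]
    rw [this]
    have h1 : |f x|^2 = f x ^2 := sq_abs _
    have h2 : |g x|^2 = g x ^2 := sq_abs _
    simp only [Pi.add_apply]
    nlinarith [sq_abs (f x), sq_abs (g x)]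
  have key : ∀ t : ℝ, 0 ≤ (∫ x, (f x)^2 ∂μ) * (t * t) + (2 * ∫ x, f x * g x ∂μ) * t
      + (∫ x, (g x)^2 ∂μ) := by
    intro t
    have h0 : 0 ≤ ∫ x, (t * f x + g x)^2 ∂μ := integral_nonneg fun x => sq_nonneg _
    have hexp : ∫ x, (t * f x + g x)^2 ∂μ
        = (∫ x, (f x)^2 ∂μ) * (t * t) + (2 * ∫ x, f x * g x ∂μ) * t + ∫ x, (g x)^2 ∂μ := by
      have hpt : ∀ x, (t * f x + g x)^2
          = (t*t) * (f x)^2 + (2*t) * (f x * g x) + (g x)^2 := fun x => by ring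
      simp_rw [hpt]
      have i1 : Integrable (fun x => t * t * (f x)^2) μ := hf2.const_mul _
      have i2 : Integrable (fun x => 2 * t * (f x * g x)) μ := hfg.const_mul _
      have i12 : Integrable (fun x => t * t * (f x)^2 + 2 * t * (f x * g x)) μ := i1.add i2
      rw [integral_add i12 hg2, integral_add i1 i2, integral_const_mul, integral_const_mul]
      ring
    linarith [hexp ▸ h0]
  have hd := discrim_le_zero key
  rw [discrim] at hd
  nlinarith [hd]

lemma integral_one_Ioo : (∫ _x in Ioo (0:ℝ) 1, (1:ℝ)) = 1 := by
  simp [Real.volume_Ioo]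

lemma sq_integral_le {f : ℝ → ℝ} (hf : MemLp f 2 (volume.restrict (Ioo (0:ℝ) 1))) :
    (∫ x in Ioo (0:ℝ) 1, f x)^2 ≤ ∫ x in Ioo (0:ℝ) 1, (f x)^2 := by
  have h1 : MemLp (fun _ : ℝ => (1:ℝ)) 2 (volume.restrict (Ioo (0:ℝ) 1)) :=
    memL2_of_continuousOn continuousOn_const
  have := integral_cs hf h1
  simpa [integral_one_Ioo] using this

section Poincare

variable {f f' : ℝ → ℝ}

/-- Sharp Poincaré: the quantitative step on a compact subinterval `[a,b] ⊂ (0,1)`. -/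
lemma poincare_stepA
    (hd : ∀ x ∈ Icc (0:ℝ) 1, HasDerivAt f (f' x) x)
    (hf'i : IntegrableOn f' (Ioo (0:ℝ) 1))
    (hf'sq : IntegrableOn (fun x => (f' x)^2) (Ioo (0:ℝ) 1))
    {a b : ℝ} (ha : 0 < a) (hab : a ≤ b) (hb : b < 1) :
    Real.pi^2 * ∫ x in Ioc a b, (f x)^2 ≤ (∫ x in Ioc a b, (f' x)^2)
      + (Real.pi * (Real.cos (Real.pi*a) / Real.sin (Real.pi*a)) * (f a)^2
        - Real.pi * (Real.cos (Real.pi*b) / Real.sin (Real.pi*b)) * (f b)^2) := by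
  set π := Real.pi with hπdef
  have hπ : 0 < π := Real.pi_pos
  set ct : ℝ → ℝ := fun x => Real.cos (π*x) / Real.sin (π*x) with hct
  set H : ℝ → ℝ := fun x => π * ct x * (f x)^2 with hH
  set D : ℝ → ℝ := fun x => 2*π*(ct x)*(f x)*(f' x) - π^2*(f x)^2 - π^2*(ct x)^2*(f x)^2 with hD
  have hsub : Icc a b ⊆ Icc (0:ℝ) 1 := Icc_subset_Icc ha.le hb.le
  have hsubo : Icc a b ⊆ Ioo (0:ℝ) 1 := fun x hx => ⟨lt_of_lt_of_le ha hx.1, lt_of_le_of_lt hx.2 hb⟩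
  have hsin : ∀ x ∈ Icc a b, 0 < Real.sin (π*x) := by
    intro x hx
    have h1 : 0 < x := lt_of_lt_of_le ha hx.1
    have h2 : x < 1 := lt_of_le_of_lt hx.2 hb
    apply Real.sin_pos_of_pos_of_lt_pi
    · positivity
    · nlinarith
  have hfc : ContinuousOn f (Icc (0:ℝ) 1) :=
    fun x hx => ((hd x hx).continuousAt).continuousWithinAt
  -- derivative of H
  have hHd : ∀ x ∈ Icc a b, HasDerivAt H (D x) x := by
    intro x hx
    have hs := (hsin x hx).ne'
    have hdx := hd x (hsub hx)
    have hpix : HasDerivAt (fun y : ℝ => π * y) π x := by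
      simpa using (hasDerivAt_id x).const_mul π
    have hcos : HasDerivAt (fun y => Real.cos (π*y)) (-Real.sin (π*x) * π) x :=
      (Real.hasDerivAt_cos (π*x)).comp x hpix
    have hsin' : HasDerivAt (fun y => Real.sin (π*y)) (Real.cos (π*x) * π) x :=
      (Real.hasDerivAt_sin (π*x)).comp x hpix
    have hcot : HasDerivAt ct
        ((-Real.sin (π*x) * π * Real.sin (π*x) - Real.cos (π*x) * (Real.cos (π*x) * π))
          / (Real.sin (π*x))^2) x := hcos.div hsin' hs
    have hf2 : HasDerivAt (fun y => (f y)^2) ((2:ℕ) * f x ^ 1 * f' x) x := hdx.pow 2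
    have hmain : HasDerivAt H _ x := (hcot.const_mul π).mul hf2
    convert hmain using 1
    have hpyth : Real.sin (π*x)^2 + Real.cos (π*x)^2 = 1 := Real.sin_sq_add_cos_sq _
    simp only [hD, hct]
    field_simp
    push_cast
    nlinarith [hpyth, sq_nonneg (f x), sq_nonneg (Real.sin (π*x))]
  -- integrability of D on Icc a b
  have hctc : ContinuousOn ct (Icc a b) := by
    apply ContinuousOn.div
    · exact (Real.continuous_cos.comp (continuous_const.mul continuous_id)).continuousOn
    · exact (Real.continuous_sin.comp (continuous_const.mul continuous_id)).continuousOn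
    · exact fun x hx => (hsin x hx).ne'
  have hfcab : ContinuousOn f (Icc a b) := hfc.mono hsub
  have hDint : IntegrableOn D (Icc a b) := by
    have h1 : IntegrableOn (fun x => f' x * (2*π*(ct x)*(f x))) (Icc a b) := by
      apply IntegrableOn.mul_continuousOn (hf'i.mono_set hsubo)
      · exact (continuousOn_const.mul hctc).mul hfcab
      · exact isCompact_Icc
    have h2 : IntegrableOn (fun x => π^2*(f x)^2 + π^2*(ct x)^2*(f x)^2) (Icc a b) := by
      apply ContinuousOn.integrableOn_Icc
      exact (continuousOn_const.mul (hfcab.pow 2)).add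
        ((continuousOn_const.mul (hctc.pow 2)).mul (hfcab.pow 2))
    have : D = fun x => f' x * (2*π*(ct x)*(f x)) - (π^2*(f x)^2 + π^2*(ct x)^2*(f x)^2) := by
      funext x; simp only [hD]; ring
    rw [this]
    exact h1.sub h2
  have hDiio : IntegrableOn D (Ioc a b) := hDint.mono_set Ioc_subset_Icc_self
  -- FTC
  have hFTC : ∫ x in Ioc a b, D x = H b - H a := by
    have := intervalIntegral.integral_eq_sub_of_hasDerivAt
      (f := H) (f' := D) (a := a) (b := b)
      (by rw [uIcc_of_le hab]; exact hHd)
      ((intervalIntegrable_iff_integrableOn_Ioc_of_le hab).mpr hDiio)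
    rwa [intervalIntegral.integral_of_le hab] at this
  -- nonnegativity of the completed square
  have hnn : 0 ≤ ∫ x in Ioc a b, (f' x - π * ct x * f x)^2 :=
    setIntegral_nonneg measurableSet_Ioc fun x _ => sq_nonneg _
  -- split
  have hf'sqab : IntegrableOn (fun x => (f' x)^2) (Ioc a b) :=
    hf'sq.mono_set fun x hx => hsubo ⟨hx.1.le, hx.2⟩
  have hrest : IntegrableOn (fun x => π^2*(f x)^2 + D x) (Ioc a b) := by
    refine (((ContinuousOn.integrableOn_Icc ?_).mono_set Ioc_subset_Icc_self).add hDiio)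
    exact continuousOn_const.mul (hfcab.pow 2)
  have hsplit : ∫ x in Ioc a b, (f' x - π * ct x * f x)^2
      = (∫ x in Ioc a b, (f' x)^2) - ∫ x in Ioc a b, (π^2*(f x)^2 + D x) := by
    rw [← integral_sub hf'sqab hrest]
    apply setIntegral_congr_fun measurableSet_Ioc
    intro x _
    simp only [hD]
    ring
  have hsplit2 : ∫ x in Ioc a b, (π^2*(f x)^2 + D x)
      = π^2 * (∫ x in Ioc a b, (f x)^2) + (H b - H a) := by
    rw [integral_add (((ContinuousOn.integrableOn_Icc (f := fun x => π^2*(f x)^2)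
      (continuousOn_const.mul (hfcab.pow 2))).mono_set Ioc_subset_Icc_self)) hDiio, hFTC]
    congr 1
    rw [← integral_const_mul]
  have : H b - H a ≤ (∫ x in Ioc a b, (f' x)^2) - π^2 * ∫ x in Ioc a b, (f x)^2 := by
    rw [hsplit, hsplit2] at hnn
    linarith
  simp only [hH, hct] at this ⊢
  linarith

end Poincare

lemma tendsto_div_sin : Tendsto (fun y : ℝ => y / Real.sin y) (nhdsWithin 0 {(0:ℝ)}ᶜ) (nhds 1) := by
  have h1 : Tendsto (fun y : ℝ => Real.sin y / y) (nhdsWithin 0 {(0:ℝ)}ᶜ) (nhds 1) := by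
    have := hasDerivAt_iff_tendsto_slope.mp (Real.hasDerivAt_sin 0)
    simp only [Real.cos_zero] at this
    refine this.congr fun y => ?_
    rw [slope_def_field, Real.sin_zero, sub_zero, sub_zero]
  have := h1.inv₀ one_ne_zero
  simp only [inv_one] at this
  refine this.congr fun y => ?_
  rw [inv_div]

/-- Boundary term vanishes at 0. -/
lemma H_tendsto_zero_left {f : ℝ → ℝ} {d : ℝ} (hd : HasDerivAt f d 0) (h0 : f 0 = 0) :
    Tendsto (fun x => Real.pi * (Real.cos (Real.pi*x) / Real.sin (Real.pi*x)) * (f x)^2)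
      (nhdsWithin 0 (Ioi (0:ℝ))) (nhds 0) := by
  set π := Real.pi
  have hπ : 0 < π := Real.pi_pos
  have hmap : Tendsto (fun x : ℝ => π * x) (nhdsWithin 0 (Ioi (0:ℝ))) (nhdsWithin 0 {(0:ℝ)}ᶜ) := by
    rw [tendsto_nhdsWithin_iff]
    constructor
    · have : Tendsto (fun x : ℝ => π * x) (nhds 0) (nhds (π * 0)) :=
        (continuous_const.mul continuous_id).tendsto 0
      simpa using this.mono_left nhdsWithin_le_nhds
    · exact eventually_mem_nhdsWithin.mono fun x hx => ne_of_gt (mul_pos hπ hx)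
  have t2 : Tendsto (fun x : ℝ => (π*x) / Real.sin (π*x)) (nhdsWithin 0 (Ioi (0:ℝ))) (nhds 1) :=
    tendsto_div_sin.comp hmap
  have t1 : Tendsto (fun x : ℝ => Real.cos (π*x)) (nhdsWithin 0 (Ioi (0:ℝ))) (nhds 1) := by
    have : Tendsto (fun x : ℝ => Real.cos (π*x)) (nhds 0) (nhds (Real.cos (π*0))) :=
      (Real.continuous_cos.comp (continuous_const.mul continuous_id)).tendsto 0
    simpa using this.mono_left nhdsWithin_le_nhds
  have t3 : Tendsto (fun x : ℝ => f x / x) (nhdsWithin 0 (Ioi (0:ℝ))) (nhds d) := by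
    have := hasDerivAt_iff_tendsto_slope.mp hd
    have h := this.mono_left (nhdsWithin_mono 0 (fun x hx => ne_of_gt hx))
    refine h.congr fun y => ?_
    rw [slope_def_field, h0, sub_zero, sub_zero]
  have t4 : Tendsto f (nhdsWithin 0 (Ioi (0:ℝ))) (nhds 0) := by
    have := hd.continuousAt.tendsto
    rw [h0] at this
    exact this.mono_left nhdsWithin_le_nhds
  have tprod := ((t1.mul t2).mul t3).mul t4
  simp only [one_mul, mul_zero] at tprod
  refine tprod.congr' (eventually_mem_nhdsWithin.mono fun x hx => ?_)
  have hx0 : x ≠ 0 := ne_of_gt hx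
  rcases eq_or_ne (Real.sin (π*x)) 0 with hs | hs
  · simp [hs]
  · field_simp

/-- Boundary term vanishes at 1. -/
lemma H_tendsto_zero_right {f : ℝ → ℝ} {d : ℝ} (hd : HasDerivAt f d 1) (h1 : f 1 = 0) :
    Tendsto (fun x => Real.pi * (Real.cos (Real.pi*x) / Real.sin (Real.pi*x)) * (f x)^2)
      (nhdsWithin 1 (Iio (1:ℝ))) (nhds 0) := by
  set π := Real.pi with hπeq
  have hπ : 0 < π := Real.pi_pos
  have hmap : Tendsto (fun x : ℝ => π * (1 - x)) (nhdsWithin 1 (Iio (1:ℝ)))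
      (nhdsWithin 0 {(0:ℝ)}ᶜ) := by
    rw [tendsto_nhdsWithin_iff]
    constructor
    · have : Tendsto (fun x : ℝ => π * (1 - x)) (nhds 1) (nhds (π * (1 - 1))) :=
        (continuous_const.mul (continuous_const.sub continuous_id)).tendsto 1
      simpa using this.mono_left nhdsWithin_le_nhds
    · exact eventually_mem_nhdsWithin.mono fun x hx =>
        ne_of_gt (mul_pos hπ (sub_pos.mpr (mem_Iio.mp hx)))
  have t2' : Tendsto (fun x : ℝ => (π*(1-x)) / Real.sin (π*(1-x)))
      (nhdsWithin 1 (Iio (1:ℝ))) (nhds 1) := tendsto_div_sin.comp hmap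
  have t2 : Tendsto (fun x : ℝ => (π*(x-1)) / Real.sin (π*x))
      (nhdsWithin 1 (Iio (1:ℝ))) (nhds (-1)) := by
    refine (t2'.neg.congr fun x => ?_)
    rw [show Real.sin (π*x) = Real.sin (π*(1-x)) from ?_]
    · rw [show π*(x-1) = -(π*(1-x)) from by ring, neg_div]
    · rw [show π*(1-x) = π - π*x from by ring]
      rw [hπeq, Real.sin_pi_sub]
  have t1 : Tendsto (fun x : ℝ => Real.cos (π*x)) (nhdsWithin 1 (Iio (1:ℝ))) (nhds (-1)) := by
    have : Tendsto (fun x : ℝ => Real.cos (π*x)) (nhds 1) (nhds (Real.cos (π*1))) :=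
      (Real.continuous_cos.comp (continuous_const.mul continuous_id)).tendsto 1
    simpa [hπeq, Real.cos_pi] using this.mono_left nhdsWithin_le_nhds
  have t3 : Tendsto (fun x : ℝ => f x / (x-1)) (nhdsWithin 1 (Iio (1:ℝ))) (nhds d) := by
    have := hasDerivAt_iff_tendsto_slope.mp hd
    have h := this.mono_left (nhdsWithin_mono 1 (fun x hx => ne_of_lt hx))
    refine h.congr fun y => ?_
    rw [slope_def_field, h1, sub_zero]
  have t4 : Tendsto f (nhdsWithin 1 (Iio (1:ℝ))) (nhds 0) := by
    have := hd.continuousAt.tendsto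
    rw [h1] at this
    exact this.mono_left nhdsWithin_le_nhds
  have tprod := ((t1.mul t2).mul t3).mul t4
  simp only [mul_zero, neg_mul, neg_neg, one_mul] at tprod
  refine tprod.congr' (eventually_mem_nhdsWithin.mono fun x hx => ?_)
  have hx1 : x - 1 ≠ 0 := sub_ne_zero.mpr (ne_of_lt hx)
  rcases eq_or_ne (Real.sin (π*x)) 0 with hs | hs
  · simp [hs]
  · field_simp
lemma poincare_sharp {f f' : ℝ → ℝ}
    (hd : ∀ x ∈ Icc (0:ℝ) 1, HasDerivAt f (f' x) x)
    (h0 : f 0 = 0) (h1 : f 1 = 0)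
    (hm : MemLp f' 2 (volume.restrict (Ioo (0:ℝ) 1))) :
    Real.pi^2 * ∫ x in Ioo (0:ℝ) 1, (f x)^2 ≤ ∫ x in Ioo (0:ℝ) 1, (f' x)^2 := by
  have : IsFiniteMeasure (volume.restrict (Ioo (0:ℝ) 1)) := by
    constructor
    rw [Measure.restrict_apply_univ, Real.volume_Ioo]
    norm_num
  have hf'i : IntegrableOn f' (Ioo (0:ℝ) 1) := hm.integrable one_le_two
  have hf'sq : IntegrableOn (fun x => (f' x)^2) (Ioo (0:ℝ) 1) := hm.integrable_sq
  have hfc : ContinuousOn f (Icc (0:ℝ) 1) :=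
    fun x hx => ((hd x hx).continuousAt).continuousWithinAt
  have hfsq : IntegrableOn (fun x => (f x)^2) (Ioo (0:ℝ) 1) :=
    ((hfc.pow 2).integrableOn_Icc).mono_set Ioo_subset_Icc_self
  set H : ℝ → ℝ := fun x => Real.pi * (Real.cos (Real.pi*x) / Real.sin (Real.pi*x)) * (f x)^2
    with hHdef
  set a : ℕ → ℝ := fun n => 1/(n+2) with hadef
  have ha_pos : ∀ n, 0 < a n := fun n => by positivity
  have ha_half : ∀ n : ℕ, a n ≤ 1/2 := by
    intro n
    rw [hadef]
    rw [div_le_div_iff₀ (by positivity) (by norm_num)]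
    have : (0:ℝ) ≤ n := Nat.cast_nonneg n
    linarith
  have ha_anti : ∀ n m : ℕ, n ≤ m → a m ≤ a n := by
    intro n m hnm
    apply div_le_div_of_nonneg_left (by norm_num) (by positivity)
    have : (n:ℝ) ≤ m := Nat.cast_le.mpr hnm
    linarith
  -- step A applied
  have key : ∀ n : ℕ, Real.pi^2 * ∫ x in Ioc (a n) (1 - a n), (f x)^2
      ≤ (∫ x in Ioo (0:ℝ) 1, (f' x)^2) + (H (a n) - H (1 - a n)) := by
    intro n
    have h1n : a n ≤ 1 - a n := by linarith [ha_half n]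
    have h2n : 1 - a n < 1 := by linarith [ha_pos n]
    have hA := poincare_stepA hd hf'i hf'sq (ha_pos n) h1n h2n
    have hsubn : Ioc (a n) (1 - a n) ⊆ Ioo (0:ℝ) 1 :=
      fun x hx => ⟨lt_trans (ha_pos n) hx.1, lt_of_le_of_lt hx.2 h2n⟩
    have hmono : ∫ x in Ioc (a n) (1 - a n), (f' x)^2 ≤ ∫ x in Ioo (0:ℝ) 1, (f' x)^2 :=
      setIntegral_mono_set hf'sq (Filter.Eventually.of_forall fun x => sq_nonneg _)
        (HasSubset.Subset.eventuallyLE hsubn)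
    simp only [hHdef]
    linarith
  -- limit of integrals
  have hsets_mono : Monotone (fun n => Ioc (a n) (1 - a n)) := by
    intro n m hnm
    exact Ioc_subset_Ioc (ha_anti n m hnm) (by linarith [ha_anti n m hnm])
  have hunion : (⋃ n, Ioc (a n) (1 - a n)) = Ioo (0:ℝ) 1 := by
    ext x
    simp only [mem_iUnion, mem_Ioc, mem_Ioo]
    constructor
    · rintro ⟨n, hn1, hn2⟩
      exact ⟨lt_trans (ha_pos n) hn1, lt_of_le_of_lt hn2 (by linarith [ha_pos n])⟩
    · rintro ⟨hx0, hx1⟩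
      obtain ⟨n, hn⟩ := exists_nat_gt (max (1/x) (1/(1-x)))
      have hx1' : 0 < 1 - x := by linarith
      have e1 : 1/x < (n:ℝ)+2 := by have := le_max_left (1/x) (1/(1-x)); linarith
      have e2 : 1/(1-x) < (n:ℝ)+2 := by have := le_max_right (1/x) (1/(1-x)); linarith
      have f1 : a n < x := by
        rw [hadef, div_lt_iff₀ (by positivity : (0:ℝ) < (n:ℝ)+2)]
        rw [div_lt_iff₀ hx0] at e1
        nlinarith
      have f2 : a n < 1-x := by
        rw [hadef, div_lt_iff₀ (by positivity : (0:ℝ) < (n:ℝ)+2)]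
        rw [div_lt_iff₀ hx1'] at e2
        nlinarith
      exact ⟨n, f1, by linarith⟩
  have hLf : Tendsto (fun n => ∫ x in Ioc (a n) (1 - a n), (f x)^2) atTop
      (nhds (∫ x in Ioo (0:ℝ) 1, (f x)^2)) := by
    have := tendsto_setIntegral_of_monotone (fun n : ℕ => measurableSet_Ioc) hsets_mono
      (by rw [hunion]; exact hfsq)
    rwa [hunion] at this
  have haT : Tendsto a atTop (nhdsWithin 0 (Ioi (0:ℝ))) := by
    rw [tendsto_nhdsWithin_iff]
    constructor
    · have h2 : Tendsto (fun n : ℕ => (n:ℝ)+2) atTop atTop :=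
        tendsto_atTop_add_const_right _ 2 tendsto_natCast_atTop_atTop
      have := h2.inv_tendsto_atTop
      simpa [hadef, one_div, Pi.inv_def] using this
    · exact Filter.Eventually.of_forall fun n => ha_pos n
  have hbT : Tendsto (fun n => 1 - a n) atTop (nhdsWithin 1 (Iio (1:ℝ))) := by
    rw [tendsto_nhdsWithin_iff]
    constructor
    · have h2 : Tendsto (fun n : ℕ => (n:ℝ)+2) atTop atTop :=
        tendsto_atTop_add_const_right _ 2 tendsto_natCast_atTop_atTop
      have h3 := h2.inv_tendsto_atTop
      have := (tendsto_const_nhds (x := (1:ℝ)) (f := atTop (α := ℕ))).sub h3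
      simpa [hadef, one_div] using this
    · exact Filter.Eventually.of_forall fun n => by
        simpa using sub_lt_self (1:ℝ) (ha_pos n)
  have hHa := (H_tendsto_zero_left (hd 0 ⟨le_refl 0, zero_le_one⟩) h0).comp haT
  have hHb := (H_tendsto_zero_right (hd 1 ⟨zero_le_one, le_refl 1⟩) h1).comp hbT
  have hRHS : Tendsto (fun n => (∫ x in Ioo (0:ℝ) 1, (f' x)^2) + (H (a n) - H (1 - a n)))
      atTop (nhds (∫ x in Ioo (0:ℝ) 1, (f' x)^2)) := by
    have := (tendsto_const_nhds (x := ∫ x in Ioo (0:ℝ) 1, (f' x)^2)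
      (f := atTop (α := ℕ))).add (hHa.sub hHb)
    simpa [hHdef] using this
  exact le_of_tendsto_of_tendsto' (hLf.const_mul (Real.pi^2)) hRHS key

lemma const_int (c : ℝ) : (∫ _x in Ioo (0:ℝ) 1, c) = c := by
  rw [setIntegral_const, Real.volume_real_Ioo]
  norm_num

lemma integrableOn_const_Ioo (c : ℝ) : IntegrableOn (fun _ => c) (Ioo (0:ℝ) 1) := by
  exact integrableOn_const (by rw [Real.volume_Ioo]; exact ENNReal.ofReal_ne_top)

lemma xphi_bound {φ φ' : ℝ → ℝ}
    (hd : ∀ x ∈ Icc (0:ℝ) 1, HasDerivAt φ (φ' x) x)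
    (hφ'c : ContinuousOn φ' (Icc 0 1))
    (hmean : (∫ x in Ioo (0:ℝ) 1, φ x) = 0) :
    (∫ x in Ioo (0:ℝ) 1, x * φ x)^2 ≤ (1/(3*Real.pi^2)) * ∫ x in Ioo (0:ℝ) 1, (φ' x)^2 := by
  have hφc : ContinuousOn φ (Icc (0:ℝ) 1) :=
    fun x hx => ((hd x hx).continuousAt).continuousWithinAt
  set w : ℝ → ℝ := fun x => (x^2 - x)/2 with hwdef
  have hwc : Continuous w := by fun_prop
  have hWd : ∀ x ∈ uIcc (0:ℝ) 1, HasDerivAt (fun y => w y * φ y)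
      ((x - 1/2) * φ x + w x * φ' x) x := by
    intro x hx
    rw [uIcc_of_le zero_le_one] at hx
    have hw : HasDerivAt w (x - 1/2) x := by
      have h1 : HasDerivAt w _ x := ((hasDerivAt_pow 2 x).sub (hasDerivAt_id x)).div_const 2
      convert h1 using 1
      push_cast
      ring
    exact hw.mul (hd x hx)
  have hint : IntervalIntegrable (fun x => (x - 1/2) * φ x + w x * φ' x) volume 0 1 := by
    apply ContinuousOn.intervalIntegrable
    rw [uIcc_of_le zero_le_one]
    exact ((continuousOn_id.sub continuousOn_const).mul hφc).add
      (hwc.continuousOn.mul hφ'c)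
  have hFTC := intervalIntegral.integral_eq_sub_of_hasDerivAt hWd hint
  have hw1 : w 1 = 0 := by simp [hwdef]
  have hw0 : w 0 = 0 := by simp [hwdef]
  rw [hw1, hw0, intervalIntegral.integral_of_le zero_le_one,
    integral_Ioc_eq_integral_Ioo] at hFTC
  simp only [zero_mul, sub_zero] at hFTC
  have i1 : IntegrableOn (fun x => (x - 1/2) * φ x) (Ioo (0:ℝ) 1) :=
    (((continuousOn_id.sub continuousOn_const).mul hφc).integrableOn_Icc).mono_set
      Ioo_subset_Icc_self
  have i2 : IntegrableOn (fun x => w x * φ' x) (Ioo (0:ℝ) 1) :=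
    ((hwc.continuousOn.mul hφ'c).integrableOn_Icc).mono_set Ioo_subset_Icc_self
  rw [integral_add i1 i2] at hFTC
  have ixφ : IntegrableOn (fun x => x * φ x) (Ioo (0:ℝ) 1) :=
    ((continuousOn_id.mul hφc).integrableOn_Icc).mono_set Ioo_subset_Icc_self
  have iφ : IntegrableOn φ (Ioo (0:ℝ) 1) :=
    (hφc.integrableOn_Icc).mono_set Ioo_subset_Icc_self
  have h1 : ∫ x in Ioo (0:ℝ) 1, (x - 1/2) * φ x = ∫ x in Ioo (0:ℝ) 1, x * φ x := by
    have hpt : ∀ x : ℝ, (x - 1/2) * φ x = x * φ x - (1/2) * φ x := fun x => by ring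
    simp_rw [hpt]
    rw [integral_sub ixφ (iφ.const_mul _), integral_const_mul, hmean]
    ring
  have hEq : ∫ x in Ioo (0:ℝ) 1, x * φ x = -∫ x in Ioo (0:ℝ) 1, w x * φ' x := by
    rw [← h1]; linarith
  -- Cauchy–Schwarz
  have hw2 : MemLp w 2 (volume.restrict (Ioo (0:ℝ) 1)) :=
    memL2_of_continuousOn hwc.continuousOn
  have hφ'2 : MemLp φ' 2 (volume.restrict (Ioo (0:ℝ) 1)) := memL2_of_continuousOn hφ'c
  have hcs := integral_cs hw2 hφ'2
  have hwsq : ∫ x in Ioo (0:ℝ) 1, (w x)^2 ≤ 1/64 := by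
    have hiw : IntegrableOn (fun x => (w x)^2) (Ioo (0:ℝ) 1) :=
      (((hwc.pow 2).continuousOn).integrableOn_Icc).mono_set Ioo_subset_Icc_self
    have hpt : ∀ x ∈ Ioo (0:ℝ) 1, (w x)^2 ≤ 1/64 := by
      intro x hx
      have ht : 0 ≤ x - x^2 := by nlinarith [hx.1, hx.2]
      simp only [hwdef]
      nlinarith [sq_nonneg (2*x - 1), mul_nonneg (sq_nonneg (2*x-1)) ht]
    have hmono := setIntegral_mono_on hiw (integrableOn_const_Ioo (1/64))
      measurableSet_Ioo hpt
    rwa [const_int] at hmono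
  have hφ'nn : 0 ≤ ∫ x in Ioo (0:ℝ) 1, (φ' x)^2 :=
    setIntegral_nonneg measurableSet_Ioo fun x _ => sq_nonneg _
  have hpi : 3 * Real.pi^2 ≤ 64 := by nlinarith [Real.pi_le_four, Real.pi_pos]
  have hstep : (∫ x in Ioo (0:ℝ) 1, (w x)^2) * (∫ x in Ioo (0:ℝ) 1, (φ' x)^2)
      ≤ (1/(3*Real.pi^2)) * ∫ x in Ioo (0:ℝ) 1, (φ' x)^2 := by
    apply mul_le_mul_of_nonneg_right _ hφ'nn
    calc (∫ x in Ioo (0:ℝ) 1, (w x)^2) ≤ 1/64 := hwsq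
    _ ≤ 1/(3*Real.pi^2) := by
        rw [div_le_div_iff₀ (by norm_num) (by positivity)]
        linarith
  rw [hEq, neg_pow]
  simpa using le_trans hcs hstep

lemma meanzero_bound {φ φ' : ℝ → ℝ}
    (hd : ∀ x ∈ Icc (0:ℝ) 1, HasDerivAt φ (φ' x) x)
    (hφ'c : ContinuousOn φ' (Icc 0 1))
    (hmean : (∫ x in Ioo (0:ℝ) 1, φ x) = 0) :
    (∫ x in Ioo (0:ℝ) 1, (φ x)^2) ≤ ∫ x in Ioo (0:ℝ) 1, (φ' x)^2 := by
  have hφc : ContinuousOn φ (Icc (0:ℝ) 1) :=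
    fun x hx => ((hd x hx).continuousAt).continuousWithinAt
  have iφ : IntegrableOn φ (Ioo (0:ℝ) 1) :=
    (hφc.integrableOn_Icc).mono_set Ioo_subset_Icc_self
  have iφ'a : IntegrableOn (fun t => |φ' t|) (Ioo (0:ℝ) 1) :=
    (hφ'c.abs.integrableOn_Icc).mono_set Ioo_subset_Icc_self
  set M : ℝ := ∫ t in Ioo (0:ℝ) 1, |φ' t| with hMdef
  have hM0 : 0 ≤ M := setIntegral_nonneg measurableSet_Ioo fun x _ => abs_nonneg _
  -- pointwise bound |φ x| ≤ M on Icc 0 1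
  have claim : ∀ x ∈ Icc (0:ℝ) 1, |φ x| ≤ M := by
    intro x hx
    have hrep : φ x = ∫ y in Ioo (0:ℝ) 1, (φ x - φ y) := by
      rw [integral_sub (integrableOn_const_Ioo (φ x)) iφ, hmean, const_int]
      ring
    have habs : |φ x| ≤ ∫ y in Ioo (0:ℝ) 1, |φ x - φ y| := by
      calc |φ x| = |∫ y in Ioo (0:ℝ) 1, (φ x - φ y)| := by rw [← hrep]
      _ ≤ ∫ y in Ioo (0:ℝ) 1, |φ x - φ y| := by
          simpa [Real.norm_eq_abs] using
            norm_integral_le_integral_norm (μ := volume.restrict (Ioo (0:ℝ) 1))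
              (f := fun y => φ x - φ y)
    have hpt : ∀ y ∈ Ioo (0:ℝ) 1, |φ x - φ y| ≤ M := by
      intro y hy
      have hy' : y ∈ Icc (0:ℝ) 1 := Ioo_subset_Icc_self hy
      have hsub : uIcc y x ⊆ Icc (0:ℝ) 1 := uIcc_subset_Icc hy' hx
      have hFTC := intervalIntegral.integral_eq_sub_of_hasDerivAt
        (f := φ) (f' := φ') (a := y) (b := x)
        (fun t ht => hd t (hsub ht))
        (ContinuousOn.intervalIntegrable (hφ'c.mono hsub))
      have hb1 : |φ x - φ y| = |∫ t in y..x, φ' t| := by rw [hFTC]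
      have hb2 : |∫ t in y..x, φ' t| ≤ ∫ t in Set.uIoc y x, |φ' t| := by
        simpa [Real.norm_eq_abs] using
          intervalIntegral.norm_integral_le_integral_norm_uIoc (a := y) (b := x)
            (f := φ') (μ := volume)
      have hb3 : ∫ t in Set.uIoc y x, |φ' t| ≤ M := by
        apply setIntegral_mono_set iφ'a
          (Filter.Eventually.of_forall fun t => abs_nonneg _)
        rw [MeasureTheory.ae_le_set]
        apply measure_mono_null (t := ({0,1} : Set ℝ))
        · rintro t ⟨ht, hnt⟩
          have hIcc : t ∈ Icc (0:ℝ) 1 := hsub (Ioc_subset_Icc_self ht)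
          rw [← Icc_diff_Ioo_same (zero_le_one (α := ℝ))]
          exact ⟨hIcc, hnt⟩
        · rw [Set.insert_eq]
          exact measure_union_null Real.volume_singleton Real.volume_singleton
      linarith [hb1 ▸ le_trans hb2 hb3]
    have : ∫ y in Ioo (0:ℝ) 1, |φ x - φ y| ≤ ∫ _y in Ioo (0:ℝ) 1, M := by
      apply setIntegral_mono_on _ (integrableOn_const_Ioo M) measurableSet_Ioo hpt
      exact ((continuousOn_const.sub hφc).abs.integrableOn_Icc).mono_set Ioo_subset_Icc_self
    rw [const_int] at this
    linarith
  -- conclude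
  have h1 : (∫ x in Ioo (0:ℝ) 1, (φ x)^2) ≤ M^2 := by
    have := setIntegral_mono_on
      (((hφc.pow 2).integrableOn_Icc).mono_set Ioo_subset_Icc_self)
      (integrableOn_const_Ioo (M^2)) measurableSet_Ioo ?_
    · rwa [const_int] at this
    · intro x hx
      have h := claim x (Ioo_subset_Icc_self hx)
      calc (φ x)^2 = |φ x|^2 := (sq_abs _).symm
      _ ≤ M^2 := by nlinarith [abs_nonneg (φ x)]
  have h2 : M^2 ≤ ∫ x in Ioo (0:ℝ) 1, (φ' x)^2 := by
    have habs2 : MemLp (fun t => |φ' t|) 2 (volume.restrict (Ioo (0:ℝ) 1)) :=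
      memL2_of_continuousOn hφ'c.abs
    have := sq_integral_le habs2
    simpa [sq_abs] using this
  linarith

end Helpers

/-- The instantaneous cost functional q(ξ,w,φ,u) of the tank-liquid system,
expressed through φ, φ', φ'', u, u'. -/
noncomputable def qCost (γ k Q r μ σ κ : ℝ) (ξ w : ℝ) (φ φ' φ'' u u' : ℝ → ℝ) : ℝ :=
  k * ξ^2 + ((γ - 2) / (2*k)) * (w + k*ξ)^2
    + Q * κ * (∫ x in Ioo (0:ℝ) 1, (u x)^2)
    + Q * μ * (∫ x in Ioo (0:ℝ) 1, (u' x)^2)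
    + Q * κ * r * (∫ x in Ioo (0:ℝ) 1, (φ x)^2)
    + Q * r * (σ*κ + μ) * (∫ x in Ioo (0:ℝ) 1, (φ' x)^2)
    + Q * μ * σ * r * (∫ x in Ioo (0:ℝ) 1, (φ'' x)^2)
    + (γ * k^3 * r^2 / 2) * Q^2
        * (∫ x in Ioo (0:ℝ) 1, (κ * x * φ x - ((r+1)/r) * u x + μ * φ' x))^2
    - γ * k * Q * r * (w + k*ξ)
        * (∫ x in Ioo (0:ℝ) 1, (κ * x * φ x - ((r+1)/r) * u x + μ * φ' x))

/-- The critical gain γ* of assumption (A). -/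
noncomputable def gammaStar (k Q r μ σ κ : ℝ) : ℝ :=
  2 / (1 - (μ * r * k^3 * Q / (1 + σ * Real.pi^2))
    * ((1 + κ / (Real.pi * μ * Real.sqrt 3))^2
      + (r+1)^2 * (1 + σ * Real.pi^2) / (r * μ * (κ + μ * Real.pi^2))))

set_option maxHeartbeats 1000000

lemma cross_aux {c x y n : ℝ} (hc : 0 < c) (hn : 0 ≤ n)
    (h1 : x^2 ≤ c^2*n) (h2 : y^2 ≤ n) : x*y ≤ c*n := by
  nlinarith [sq_nonneg (x - c*y), mul_le_mul_of_nonneg_left h2 (sq_nonneg c)]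

lemma asq_aux {κ μ c Ix Iφ n : ℝ} (hκ : 0 ≤ κ) (hμ : 0 ≤ μ) (hc : 0 ≤ c)
    (h1 : Ix^2 ≤ c^2*n) (h2 : Iφ^2 ≤ n) (h3 : Ix*Iφ ≤ c*n) :
    (κ*Ix + μ*Iφ)^2 ≤ (μ + κ*c)^2*n := by
  nlinarith [mul_le_mul_of_nonneg_left h1 (sq_nonneg κ),
    mul_le_mul_of_nonneg_left h2 (sq_nonneg μ),
    mul_le_mul_of_nonneg_left h3 (by positivity : (0:ℝ) ≤ 2*κ*μ)]

lemma w_aux {k ξ w : ℝ} : ξ^2 + w^2 ≤ (2+2*k^2)*(ξ^2 + (w+k*ξ)^2) := by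
  nlinarith [sq_nonneg (w + 2*k*ξ), sq_nonneg (k*ξ), sq_nonneg (k*(w+k*ξ)), sq_nonneg ξ]

lemma pi_mono_aux {p n n' : ℝ} (hp : 1 ≤ p) (hn : 0 ≤ n) (h : p*n ≤ n') : n ≤ n' := by
  nlinarith

/-- Lemma 1: coercivity of the instantaneous cost under
assumption (A) and γ > γ*. -/
theorem qCost_coercive (γ k Q r μ σ κ : ℝ)
    (hγpos : 0 < γ) (hk : 0 < k) (hQ : 0 < Q) (hr : 0 < r)
    (hμ : 0 < μ) (hσ : 0 < σ) (hκ : 0 ≤ κ)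
    (hden : 0 < 1 - (μ * r * k^3 * Q / (1 + σ * Real.pi^2))
      * ((1 + κ / (Real.pi * μ * Real.sqrt 3))^2
        + (r+1)^2 * (1 + σ * Real.pi^2) / (r * μ * (κ + μ * Real.pi^2))))
    (hγ : γ > gammaStar k Q r μ σ κ) :
    ∃ A : ℝ, 0 < A ∧
      ∀ (φ φ' φ'' u u' : ℝ → ℝ) (ξ w : ℝ),
        (∀ x ∈ Icc (0:ℝ) 1, HasDerivAt φ (φ' x) x) →
        (∀ x ∈ Icc (0:ℝ) 1, HasDerivAt φ' (φ'' x) x) →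
        φ' 0 = 0 → φ' 1 = 0 → (∫ x in Ioo (0:ℝ) 1, φ x) = 0 →
        (∀ x ∈ Icc (0:ℝ) 1, HasDerivAt u (u' x) x) →
        u 0 = 0 → u 1 = 0 →
        MemLp u' 2 (volume.restrict (Ioo (0:ℝ) 1)) →
        MemLp φ'' 2 (volume.restrict (Ioo (0:ℝ) 1)) →
        qCost γ k Q r μ σ κ ξ w φ φ' φ'' u u'
          ≥ A * (ξ^2 + w^2
            + ((∫ x in Ioo (0:ℝ) 1, (u x)^2) + (∫ x in Ioo (0:ℝ) 1, (u' x)^2))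
            + ((∫ x in Ioo (0:ℝ) 1, (φ x)^2) + (∫ x in Ioo (0:ℝ) 1, (φ' x)^2)
                + (∫ x in Ioo (0:ℝ) 1, (φ'' x)^2))) := by
  have hπ : 0 < Real.pi := Real.pi_pos
  have hπ4 : Real.pi ≤ 4 := Real.pi_le_four
  have hπ1 : 1 ≤ Real.pi^2 := by nlinarith [Real.pi_gt_three]
  have hs3 : 0 < Real.sqrt 3 := Real.sqrt_pos.mpr (by norm_num)
  have hσπ : 0 < 1 + σ * Real.pi^2 := by positivity
  have hκμ : 0 < κ + μ * Real.pi^2 := by positivity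
  obtain ⟨P, hPdef⟩ : ∃ P : ℝ, P = 1 + κ / (Real.pi * μ * Real.sqrt 3) := ⟨_, rfl⟩
  have hP : 0 < P := by
    have : 0 ≤ κ / (Real.pi * μ * Real.sqrt 3) := by positivity
    rw [hPdef]; linarith
  obtain ⟨A2, hA2def⟩ : ∃ A2 : ℝ, A2 = μ * P^2 / (Q * r * (1 + σ * Real.pi^2)) := ⟨_, rfl⟩
  obtain ⟨B2, hB2def⟩ : ∃ B2 : ℝ, B2 = (r+1)^2 / (r^2 * Q * (κ + μ * Real.pi^2)) := ⟨_, rfl⟩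
  have hA2 : 0 < A2 := by
    rw [hA2def]; exact div_pos (mul_pos hμ (pow_pos hP 2)) (by positivity)
  have hB2 : 0 < B2 := by rw [hB2def]; exact div_pos (by positivity) (by positivity)
  obtain ⟨X, hXdef⟩ : ∃ X : ℝ, X = (μ * r * k^3 * Q / (1 + σ * Real.pi^2))
      * ((1 + κ / (Real.pi * μ * Real.sqrt 3))^2
        + (r+1)^2 * (1 + σ * Real.pi^2) / (r * μ * (κ + μ * Real.pi^2))) := ⟨_, rfl⟩
  have hXeq : X = k^3 * r^2 * Q^2 * (A2 + B2) := by
    rw [hXdef, hA2def, hB2def, hPdef]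
    field_simp
  have hX : 0 < X := by
    rw [hXeq]; exact mul_pos (by positivity) (add_pos hA2 hB2)
  have hX1 : X < 1 := by rw [hXdef]; linarith [hden]
  have h1X : 0 < 1 - X := by linarith
  have hγX : 2 < γ * (1 - X) := by
    rw [gt_iff_lt, gammaStar, ← hXdef, div_lt_iff₀ h1X] at hγ
    linarith
  have hγ2 : 2 < γ := by
    have e : γ*(1-X) = γ - γ*X := by ring
    linarith [mul_pos hγpos hX]
  have h2γX : 0 < 2 + γ * X := by linarith [mul_pos hγpos hX]
  obtain ⟨L, hLdef⟩ : ∃ L : ℝ, L = γ^2 * X / (2 + γ * X) := ⟨_, rfl⟩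
  have hL : 0 < L := by
    rw [hLdef]; exact div_pos (mul_pos (pow_pos hγpos 2) hX) h2γX
  have hLlt : L < γ - 2 := by
    rw [hLdef, div_lt_iff₀ h2γX]
    have e : γ*(1-X) = γ - γ*X := by ring
    have e2 : (γ-2)*(2+γ*X) = 2*γ - 4 + γ^2*X - 2*(γ*X) := by ring
    linarith [hγX]
  obtain ⟨η, hηdef⟩ : ∃ η : ℝ, η = (L + (γ - 2))/2 := ⟨_, rfl⟩
  have hηL : L < η := by rw [hηdef]; linarith
  have hηγ2 : η < γ - 2 := by rw [hηdef]; linarith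
  have hη0 : 0 < η := by rw [hηdef]; linarith
  have hηγ : η < γ := by linarith
  obtain ⟨c2, hc2def⟩ : ∃ c2 : ℝ, c2 = (γ - 2 - η)/(2*k) := ⟨_, rfl⟩
  have hc2 : 0 < c2 := by rw [hc2def]; exact div_pos (by linarith) (by linarith)
  obtain ⟨c3, hc3def⟩ : ∃ c3 : ℝ, c3 = 1 - (γ^2 - γ*η)*X/(2*η) := ⟨_, rfl⟩
  have hηL' : γ^2 * X < η * (2 + γ * X) := by
    rw [hLdef, div_lt_iff₀ h2γX] at hηL; exact hηL
  have hc3 : 0 < c3 := by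
    rw [hc3def]
    have h2 : (γ^2 - γ*η)*X/(2*η) < 1 := by
      rw [div_lt_one (by linarith)]
      linarith [hηL']
    linarith
  obtain ⟨A1, hA1def⟩ : ∃ A1 : ℝ, A1 = min k c2 / (2 + 2*k^2) := ⟨_, rfl⟩
  have hA1 : 0 < A1 := by rw [hA1def]; exact div_pos (lt_min hk hc2) (by positivity)
  obtain ⟨m, hmdef⟩ : ∃ m : ℝ, m = min (Q*μ/2) (min (Q*r*μ/2) (Q*μ*σ*r)) := ⟨_, rfl⟩
  have hm : 0 < m := by
    rw [hmdef]
    exact lt_min (by positivity) (lt_min (by positivity) (by positivity))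
  obtain ⟨AN, hANdef⟩ : ∃ AN : ℝ, AN = c3 * m := ⟨_, rfl⟩
  have hAN : 0 < AN := by rw [hANdef]; exact mul_pos hc3 hm
  refine ⟨min A1 AN, lt_min hA1 hAN, ?_⟩
  intro φ φ' φ'' u u' ξ w hdφ hdφ' hφ'0 hφ'1 hmean hdu hu0 hu1 hu' hφ''
  -- continuity
  have hφc : ContinuousOn φ (Icc (0:ℝ) 1) :=
    fun x hx => ((hdφ x hx).continuousAt).continuousWithinAt
  have hφ'c : ContinuousOn φ' (Icc (0:ℝ) 1) :=
    fun x hx => ((hdφ' x hx).continuousAt).continuousWithinAt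
  have huc : ContinuousOn u (Icc (0:ℝ) 1) :=
    fun x hx => ((hdu x hx).continuousAt).continuousWithinAt
  -- abbreviations for the integrals
  obtain ⟨nu, hnu⟩ : ∃ e : ℝ, e = ∫ x in Ioo (0:ℝ) 1, (u x)^2 := ⟨_, rfl⟩
  obtain ⟨nu', hnu'⟩ : ∃ e : ℝ, e = ∫ x in Ioo (0:ℝ) 1, (u' x)^2 := ⟨_, rfl⟩
  obtain ⟨np, hnp⟩ : ∃ e : ℝ, e = ∫ x in Ioo (0:ℝ) 1, (φ x)^2 := ⟨_, rfl⟩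
  obtain ⟨np', hnp'⟩ : ∃ e : ℝ, e = ∫ x in Ioo (0:ℝ) 1, (φ' x)^2 := ⟨_, rfl⟩
  obtain ⟨np'', hnp''⟩ : ∃ e : ℝ, e = ∫ x in Ioo (0:ℝ) 1, (φ'' x)^2 := ⟨_, rfl⟩
  obtain ⟨Ixφ, hIxφ⟩ : ∃ e : ℝ, e = ∫ x in Ioo (0:ℝ) 1, x * φ x := ⟨_, rfl⟩
  obtain ⟨Iu, hIu'⟩ : ∃ e : ℝ, e = ∫ x in Ioo (0:ℝ) 1, u x := ⟨_, rfl⟩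
  obtain ⟨Iφ', hIφ''⟩ : ∃ e : ℝ, e = ∫ x in Ioo (0:ℝ) 1, φ' x := ⟨_, rfl⟩
  have hnu0 : 0 ≤ nu := hnu ▸ setIntegral_nonneg measurableSet_Ioo fun x _ => sq_nonneg _
  have hnu'0 : 0 ≤ nu' := hnu' ▸ setIntegral_nonneg measurableSet_Ioo fun x _ => sq_nonneg _
  have hnp0 : 0 ≤ np := hnp ▸ setIntegral_nonneg measurableSet_Ioo fun x _ => sq_nonneg _
  have hnp'0 : 0 ≤ np' := hnp' ▸ setIntegral_nonneg measurableSet_Ioo fun x _ => sq_nonneg _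
  have hnp''0 : 0 ≤ np'' := hnp'' ▸ setIntegral_nonneg measurableSet_Ioo fun x _ => sq_nonneg _
  -- analytic inequalities
  have hPu : Real.pi^2 * nu ≤ nu' := by
    rw [hnu, hnu']; exact poincare_sharp hdu hu0 hu1 hu'
  have hPφ : Real.pi^2 * np' ≤ np'' := by
    rw [hnp', hnp'']; exact poincare_sharp hdφ' hφ'0 hφ'1 hφ''
  have hmz : np ≤ np' := by rw [hnp, hnp']; exact meanzero_bound hdφ hφ'c hmean
  have hxb : Ixφ^2 ≤ (1/(3*Real.pi^2)) * np' := by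
    rw [hIxφ, hnp']; exact xphi_bound hdφ hφ'c hmean
  have hIu2 : Iu^2 ≤ nu := by
    rw [hIu', hnu]; exact sq_integral_le (memL2_of_continuousOn huc)
  have hIφ'2 : Iφ'^2 ≤ np' := by
    rw [hIφ'', hnp']; exact sq_integral_le (memL2_of_continuousOn hφ'c)
  -- decomposition of the coupling integral
  have hIq : (∫ x in Ioo (0:ℝ) 1, (κ * x * φ x - ((r+1)/r) * u x + μ * φ' x))
      = κ * Ixφ - ((r+1)/r) * Iu + μ * Iφ' := by
    have ixφ : IntegrableOn (fun x => x * φ x) (Ioo (0:ℝ) 1) :=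
      ((continuousOn_id.mul hφc).integrableOn_Icc).mono_set Ioo_subset_Icc_self
    have iu : IntegrableOn u (Ioo (0:ℝ) 1) :=
      (huc.integrableOn_Icc).mono_set Ioo_subset_Icc_self
    have iφ' : IntegrableOn φ' (Ioo (0:ℝ) 1) :=
      (hφ'c.integrableOn_Icc).mono_set Ioo_subset_Icc_self
    have hpt : ∀ x : ℝ, κ * x * φ x - ((r+1)/r) * u x + μ * φ' x
        = (κ * (x * φ x) - ((r+1)/r) * u x) + μ * φ' x := fun x => by ring
    simp_rw [hpt]
    have j1 : IntegrableOn (fun x => κ * (x * φ x)) (Ioo (0:ℝ) 1) := ixφ.const_mul κ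
    have j2 : IntegrableOn (fun x => ((r+1)/r) * u x) (Ioo (0:ℝ) 1) := iu.const_mul _
    have j12 : IntegrableOn (fun x => κ * (x * φ x) - ((r+1)/r) * u x) (Ioo (0:ℝ) 1) :=
      j1.sub j2
    have j3 : IntegrableOn (fun x => μ * φ' x) (Ioo (0:ℝ) 1) := iφ'.const_mul μ
    rw [integral_add j12 j3, integral_sub j1 j2,
      integral_const_mul, integral_const_mul, integral_const_mul,
      ← hIxφ, ← hIu', ← hIφ'']
  obtain ⟨Nφ, hNφdef⟩ : ∃ e : ℝ, e = Q*κ*r*np + Q*r*(σ*κ+μ)*np' + Q*μ*σ*r*np'' := ⟨_, rfl⟩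
  obtain ⟨Nu, hNudef⟩ : ∃ e : ℝ, e = Q*κ*nu + Q*μ*nu' := ⟨_, rfl⟩
  have hNφ0 : 0 ≤ Nφ := by
    rw [hNφdef]
    have := mul_nonneg (by positivity : (0:ℝ) ≤ Q*κ*r) hnp0
    have := mul_nonneg (by positivity : (0:ℝ) ≤ Q*r*(σ*κ+μ)) hnp'0
    have := mul_nonneg (by positivity : (0:ℝ) ≤ Q*μ*σ*r) hnp''0
    linarith
  have hNu0 : 0 ≤ Nu := by
    rw [hNudef]
    have := mul_nonneg (by positivity : (0:ℝ) ≤ Q*κ) hnu0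
    have := mul_nonneg (by positivity : (0:ℝ) ≤ Q*μ) hnu'0
    linarith
  obtain ⟨c, hcdef⟩ : ∃ e : ℝ, e = 1/(Real.pi * Real.sqrt 3) := ⟨_, rfl⟩
  have hc : 0 < c := by rw [hcdef]; positivity
  have hc2sq : c^2 = 1/(3*Real.pi^2) := by
    have h3 : (Real.sqrt 3)^2 = 3 := Real.sq_sqrt (by norm_num)
    rw [hcdef, div_pow, one_pow, mul_pow, h3]
    ring_nf
  have hxb' : Ixφ^2 ≤ c^2 * np' := by rw [hc2sq]; linarith [hxb]
  obtain ⟨aa, haadef⟩ : ∃ e : ℝ, e = κ * Ixφ + μ * Iφ' := ⟨_, rfl⟩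
  obtain ⟨bb, hbbdef⟩ : ∃ e : ℝ, e = ((r+1)/r) * Iu := ⟨_, rfl⟩
  -- bound a² ≤ A2 Nφ
  have hcross : Ixφ * Iφ' ≤ c * np' := cross_aux hc hnp'0 hxb' hIφ'2
  have haux : aa^2 ≤ (μ + κ*c)^2 * np' := by
    rw [haadef]
    exact asq_aux hκ hμ.le hc.le hxb' hIφ'2 hcross
  have hμP : μ + κ*c = μ*P := by
    rw [hPdef, hcdef]
    field_simp
  have haux2 : aa^2 ≤ μ^2*P^2*np' := by
    have hEq : (μ + κ*c)^2 = μ^2*P^2 := by rw [hμP]; ring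
    rw [hEq] at haux; exact haux
  have s2 : Q*r*μ*((1+σ*Real.pi^2)*np') ≤ Nφ := by
    rw [hNφdef]
    have h1 := mul_le_mul_of_nonneg_left hPφ (by positivity : (0:ℝ) ≤ Q*μ*σ*r)
    have h2 := mul_nonneg (by positivity : (0:ℝ) ≤ Q*κ*r) hnp0
    have h3 := mul_nonneg (mul_nonneg (mul_nonneg hQ.le hr.le)
      (mul_nonneg hσ.le hκ)) hnp'0
    linarith [h1, h2, h3]
  have ha2N : aa^2 ≤ A2 * Nφ := by
    have hident : A2*(Q*r*μ*((1+σ*Real.pi^2)*np')) = μ^2*P^2*np' := by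
      rw [hA2def]
      field_simp
    have := mul_le_mul_of_nonneg_left s2 hA2.le
    linarith
  -- bound b² ≤ B2 Nu
  have hb1 : bb^2 ≤ ((r+1)/r)^2 * nu := by
    rw [hbbdef, mul_pow]
    exact mul_le_mul_of_nonneg_left hIu2 (sq_nonneg ((r+1)/r))
  have s2u : Q*((κ+μ*Real.pi^2)*nu) ≤ Nu := by
    rw [hNudef]
    have h1 := mul_le_mul_of_nonneg_left hPu (by positivity : (0:ℝ) ≤ Q*μ)
    linarith [h1]
  have hb2N : bb^2 ≤ B2 * Nu := by
    have hident : B2*(Q*((κ+μ*Real.pi^2)*nu)) = ((r+1)/r)^2 * nu := by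
      rw [hB2def]
      field_simp
    have := mul_le_mul_of_nonneg_left s2u hB2.le
    linarith
  -- combined bound on the coupling term
  obtain ⟨Iq, hIqdef⟩ : ∃ e : ℝ, e
      = ∫ x in Ioo (0:ℝ) 1, (κ * x * φ x - ((r+1)/r) * u x + μ * φ' x) := ⟨_, rfl⟩
  have hIab : Iq = aa - bb := by rw [hIqdef, hIq, haadef, hbbdef]; ring
  obtain ⟨t, htdef⟩ : ∃ e : ℝ, e = B2/A2 := ⟨_, rfl⟩
  have ht : 0 < t := by rw [htdef]; exact div_pos hB2 hA2
  have hI2 : Iq^2 ≤ (A2+B2)*(Nφ+Nu) := by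
    have expand : (1+t)*aa^2 + (1+1/t)*bb^2 - (aa-bb)^2 = (t*aa+bb)^2/t := by
      field_simp
      ring
    have h0 := div_nonneg (sq_nonneg (t*aa+bb)) ht.le
    have key1 : Iq^2 ≤ (1+t)*aa^2 + (1+1/t)*bb^2 := by rw [hIab]; linarith
    have key2 : (1+t)*aa^2 ≤ (1+t)*(A2*Nφ) :=
      mul_le_mul_of_nonneg_left ha2N (by linarith)
    have key3 : (1+1/t)*bb^2 ≤ (1+1/t)*(B2*Nu) := by
      have : 0 < 1/t := by positivity
      exact mul_le_mul_of_nonneg_left hb2N (by linarith)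
    have ident1 : (1+t)*(A2*Nφ) = (A2+B2)*Nφ := by
      rw [htdef]
      field_simp
    have ident2 : (1+1/t)*(B2*Nu) = (A2+B2)*Nu := by
      rw [htdef]
      have hBA : 1 + 1/(B2/A2) = (A2+B2)/B2 := by field_simp; ring
      rw [hBA]
      field_simp
    linarith [key1, key2, key3, ident1, ident2]
  -- Young inequality for the cross term
  have hY : γ*k*Q*r*(w+k*ξ)*Iq
      ≤ (η/(2*k))*(w+k*ξ)^2 + (γ^2*k^3*Q^2*r^2/(2*η))*Iq^2 := by
    have hident : (η/(2*k))*(w+k*ξ)^2 + (γ^2*k^3*Q^2*r^2/(2*η))*Iq^2 - γ*k*Q*r*(w+k*ξ)*Iq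
        = (η*(w+k*ξ) - γ*k^2*Q*r*Iq)^2/(2*k*η) := by
      field_simp
      ring
    have := div_nonneg (sq_nonneg (η*(w+k*ξ) - γ*k^2*Q*r*Iq)) (by positivity : (0:ℝ) ≤ 2*k*η)
    linarith
  -- absorption of I² term
  have hcpos : 0 ≤ (γ^2-γ*η)*k^3*r^2*Q^2/(2*η) := by
    have h : 0 ≤ γ^2 - γ*η := by
      have e : γ^2 - γ*η = γ*(γ-η) := by ring
      rw [e]
      exact (mul_pos hγpos (by linarith)).le
    have hnum : 0 ≤ (γ^2-γ*η)*k^3*r^2*Q^2 := by positivity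
    exact div_nonneg hnum (by linarith)
  have hc3ident : ((γ^2-γ*η)*k^3*r^2*Q^2/(2*η))*((A2+B2)*(Nφ+Nu)) = (1-c3)*(Nφ+Nu) := by
    rw [hc3def, hXeq]
    field_simp
    ring
  have F1 : ((γ^2-γ*η)*k^3*r^2*Q^2/(2*η))*Iq^2 ≤ (1-c3)*(Nφ+Nu) := by
    calc ((γ^2-γ*η)*k^3*r^2*Q^2/(2*η))*Iq^2
        ≤ ((γ^2-γ*η)*k^3*r^2*Q^2/(2*η))*((A2+B2)*(Nφ+Nu)) :=
          mul_le_mul_of_nonneg_left hI2 hcpos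
      _ = (1-c3)*(Nφ+Nu) := hc3ident
  -- main coercivity chain
  have step1 : qCost γ k Q r μ σ κ ξ w φ φ' φ'' u u'
      = k*ξ^2 + c2*(w+k*ξ)^2 + (η/(2*k))*(w+k*ξ)^2 + (Nφ + Nu)
        + (γ^2*k^3*Q^2*r^2/(2*η))*Iq^2 - ((γ^2-γ*η)*k^3*r^2*Q^2/(2*η))*Iq^2
        - γ*k*Q*r*(w+k*ξ)*Iq := by
    rw [qCost, ← hIqdef, ← hnu, ← hnu', ← hnp, ← hnp', ← hnp'', hc2def, hNφdef, hNudef]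
    field_simp
    ring
  have hq : qCost γ k Q r μ σ κ ξ w φ φ' φ'' u u'
      ≥ k*ξ^2 + c2*(w+k*ξ)^2 + c3*(Nφ+Nu) := by
    rw [step1]
    linarith [hY, F1]
  -- convert to the target quadratic form
  have hfin1 : A1*(ξ^2 + w^2) ≤ k*ξ^2 + c2*(w+k*ξ)^2 := by
    have hw2 : ξ^2 + w^2 ≤ (2+2*k^2)*(ξ^2 + (w+k*ξ)^2) := w_aux
    have hmin1 : (min k c2)*(ξ^2 + (w+k*ξ)^2) ≤ k*ξ^2 + c2*(w+k*ξ)^2 := by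
      have h1 := mul_le_mul_of_nonneg_right (min_le_left k c2) (sq_nonneg ξ)
      have h2 := mul_le_mul_of_nonneg_right (min_le_right k c2) (sq_nonneg (w+k*ξ))
      linarith [h1, h2]
    have hA1e : A1*(2+2*k^2) = min k c2 := by
      rw [hA1def]; field_simp
    calc A1*(ξ^2 + w^2) ≤ A1*((2+2*k^2)*(ξ^2 + (w+k*ξ)^2)) :=
          mul_le_mul_of_nonneg_left hw2 hA1.le
      _ = (min k c2)*(ξ^2 + (w+k*ξ)^2) := by rw [← hA1e]; ring
      _ ≤ k*ξ^2 + c2*(w+k*ξ)^2 := hmin1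
  have hfin2 : AN*(nu + nu' + (np + np' + np'')) ≤ c3*(Nφ+Nu) := by
    have hnunu' : nu ≤ nu' := pi_mono_aux hπ1 hnu0 hPu
    have hnp'np'' : np' ≤ np'' := pi_mono_aux hπ1 hnp'0 hPφ
    have hmQμ : m ≤ Q*μ/2 := by rw [hmdef]; exact min_le_left _ _
    have hmQrμ : m ≤ Q*r*μ/2 := by
      rw [hmdef]; exact le_trans (min_le_right _ _) (min_le_left _ _)
    have hmQμσr : m ≤ Q*μ*σ*r := by
      rw [hmdef]; exact le_trans (min_le_right _ _) (min_le_right _ _)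
    have hdrop : Q*μ*nu' + Q*r*μ*np' + Q*μ*σ*r*np'' ≤ Nφ + Nu := by
      rw [hNφdef, hNudef]
      have h1 := mul_nonneg (by positivity : (0:ℝ) ≤ Q*κ) hnu0
      have h2 := mul_nonneg (by positivity : (0:ℝ) ≤ Q*κ*r) hnp0
      have h3 := mul_nonneg (mul_nonneg (mul_nonneg hQ.le hr.le)
        (mul_nonneg hσ.le hκ)) hnp'0
      linarith [h1, h2, h3]
    have hmid : m*(nu + nu' + (np + np' + np''))
        ≤ Q*μ*nu' + Q*r*μ*np' + Q*μ*σ*r*np'' := by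
      have g1a : m*(nu+nu') ≤ m*(2*nu') := mul_le_mul_of_nonneg_left (by linarith) hm.le
      have g1b := mul_le_mul_of_nonneg_right hmQμ (by linarith : (0:ℝ) ≤ 2*nu')
      have g2a : m*(np+np') ≤ m*(2*np') := mul_le_mul_of_nonneg_left (by linarith) hm.le
      have g2b := mul_le_mul_of_nonneg_right hmQrμ (by linarith : (0:ℝ) ≤ 2*np')
      have g3 : m*np'' ≤ Q*μ*σ*r*np'' := mul_le_mul_of_nonneg_right hmQμσr hnp''0
      linarith [g1a, g1b, g2a, g2b, g3]
    calc AN*(nu + nu' + (np + np' + np'')) = c3*(m*(nu + nu' + (np + np' + np''))) := by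
          rw [hANdef]; ring
      _ ≤ c3*(Q*μ*nu' + Q*r*μ*np' + Q*μ*σ*r*np'') := mul_le_mul_of_nonneg_left hmid hc3.le
      _ ≤ c3*(Nφ+Nu) := mul_le_mul_of_nonneg_left hdrop hc3.le
  -- finish
  rw [ge_iff_le, ← hnu, ← hnu', ← hnp, ← hnp', ← hnp'']
  have hxw0 : 0 ≤ ξ^2 + w^2 := by positivity
  have hfive0 : 0 ≤ nu + nu' + (np + np' + np'') := by linarith
  have e1 : min A1 AN * (ξ^2 + w^2) ≤ A1 * (ξ^2 + w^2) :=
    mul_le_mul_of_nonneg_right (min_le_left _ _) hxw0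
  have e2 : min A1 AN * (nu + nu' + (np + np' + np'')) ≤ AN * (nu + nu' + (np + np' + np'')) :=
    mul_le_mul_of_nonneg_right (min_le_right _ _) hfive0
  linarith [hq, hfin1, hfin2, e1, e2]
end
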